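/- arXiv:1902.05331 — 5 statements merged into one kernel-verified Lean document; each statement's English description precedes it below -/
import Mathlib

section
/- For the Černý automaton with n ≥ 2 states (states 0,…,n−1, symbol a mapping i to i+1 mod n, symbol b mapping 0 to 1 and fixing all other states), the word b(a^{n−1}b)^{n−2} maps every state to the same state, i.e. it is a synchronizing word. -/
/-- Action of a word (list of functions) on a state, applied left to right. -/
def applyWord {Q : Type*} (w : List (Q → Q)) (q : Q) : Q :=
  w.foldl (fun q f => f q) q

theorem applyWord_append {Q : Type*} (w₁ w₂ : List (Q → Q)) (q : Q) :
    applyWord (w₁ ++ w₂) q = applyWord w₂ (applyWord w₁ q) := by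
  simp [applyWord, List.foldl_append]

theorem applyWord_replicate_add (n j : ℕ) (a : ZMod n → ZMod n)
    (ha : ∀ i, a i = i + 1) (q : ZMod n) :
    applyWord (List.replicate j a) q = q + (j : ℕ) := by
  induction j generalizing q with
  | zero => simp [applyWord]
  | succ j ih =>
    rw [List.replicate_succ]
    have : applyWord (a :: List.replicate j a) q = applyWord (List.replicate j a) (a q) := rfl
    rw [this, ih, ha]
    push_cast
    ring

theorem cerny_block (n : ℕ) (hn : 2 ≤ n)
    (a b : ZMod n → ZMod n)
    (ha : ∀ i, a i = i + 1)
    (hb0 : b 0 = 1) (hb : ∀ i : ZMod n, i ≠ 0 → b i = i)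
    (m : ℕ) (hm1 : 1 ≤ m) (hm2 : m ≤ n - 1) :
    applyWord (List.replicate (n - 1) a ++ [b]) ((m : ℕ) : ZMod n)
      = ((max (m - 1) 1 : ℕ) : ZMod n) := by
  haveI : NeZero n := ⟨by omega⟩
  rw [applyWord_append, applyWord_replicate_add n _ a ha]
  have hcast : ((n - 1 : ℕ) : ZMod n) = -1 := by
    rw [Nat.cast_sub (by omega)]
    simp [ZMod.natCast_self]
  rw [hcast]
  have : applyWord [b] = b := rfl
  rw [this]
  rcases eq_or_lt_of_le hm1 with h1 | h1
  · -- m = 1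
    subst h1
    norm_num
    rw [hb0]
  · -- m ≥ 2
    have hne : ((m : ℕ) : ZMod n) + -1 = ((m - 1 : ℕ) : ZMod n) := by
      rw [Nat.cast_sub (by omega)]
      push_cast
      ring
    rw [hne]
    have hnz : ((m - 1 : ℕ) : ZMod n) ≠ 0 := by
      rw [Ne, ZMod.natCast_eq_zero_iff]
      intro hdvd
      have := Nat.le_of_dvd (by omega) hdvd
      omega
    rw [hb _ hnz]
    congr 1
    omega

theorem cerny_blocks (n : ℕ) (hn : 2 ≤ n)
    (a b : ZMod n → ZMod n)
    (ha : ∀ i, a i = i + 1)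
    (hb0 : b 0 = 1) (hb : ∀ i : ZMod n, i ≠ 0 → b i = i)
    (k : ℕ) : ∀ m : ℕ, 1 ≤ m → m ≤ n - 1 →
    applyWord ((List.replicate k (List.replicate (n - 1) a ++ [b])).flatten) ((m : ℕ) : ZMod n)
      = ((max (m - k) 1 : ℕ) : ZMod n) := by
  induction k with
  | zero =>
    intro m hm1 hm2
    simp [applyWord]
    congr 1
    omega
  | succ k ih =>
    intro m hm1 hm2
    rw [List.replicate_succ, List.flatten_cons, applyWord_append,
      cerny_block n hn a b ha hb0 hb m hm1 hm2,
      ih (max (m - 1) 1) (le_max_right _ _) (by omega)]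
    congr 1
    omega

/-- the Černý automaton with `n ≥ 2` states (symbol `a : i ↦ i+1`,
symbol `b : 0 ↦ 1`, fixing other states) is synchronized by `b (a^{n-1} b)^{n-2}`. -/
theorem cerny_word_synchronizes (n : ℕ) (hn : 2 ≤ n)
    (a b : ZMod n → ZMod n)
    (ha : ∀ i, a i = i + 1)
    (hb0 : b 0 = 1) (hb : ∀ i : ZMod n, i ≠ 0 → b i = i) :
    ∃ q0 : ZMod n, ∀ q : ZMod n,
      applyWord ([b] ++ (List.replicate (n - 2) (List.replicate (n - 1) a ++ [b])).flatten) q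
        = q0 := by
  haveI : NeZero n := ⟨by omega⟩
  refine ⟨1, fun q => ?_⟩
  rw [applyWord_append]
  have h1 : applyWord [b] q = b q := rfl
  rw [h1]
  -- b q = ((m : ℕ) : ZMod n) for some 1 ≤ m ≤ n - 1
  obtain ⟨m, hm1, hm2, hmq⟩ : ∃ m : ℕ, 1 ≤ m ∧ m ≤ n - 1 ∧ b q = ((m : ℕ) : ZMod n) := by
    by_cases hq : q = 0
    · exact ⟨1, le_refl _, by omega, by simp [hq, hb0]⟩
    · refine ⟨q.val, ?_, ?_, ?_⟩
      · have : q.val ≠ 0 := fun h => hq ((ZMod.val_eq_zero q).mp h)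
        omega
      · have := ZMod.val_lt q
        omega
      · rw [hb q hq, ZMod.natCast_val, ZMod.cast_id]
  rw [hmq, cerny_blocks n hn a b ha hb0 hb (n - 2) m hm1 hm2]
  have : max (m - (n - 2)) 1 = 1 := by omega
  rw [this]
  simp
end

section
/- The Černý automaton with n ≥ 2 states has no synchronizing word of length less than (n−1)^2. -/
/-- One step of the Černý automaton encoded over `Bool`:
`false` is the cyclic shift `a`, `true` is the letter `b`. -/
def cernyStep (n : ℕ) (q : ZMod n) (x : Bool) : ZMod n :=
  if x then (if q = 0 then 1 else q) else q + 1

/-- Run a boolean word. -/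
def cernyRun (n : ℕ) (l : List Bool) (q : ZMod n) : ZMod n :=
  l.foldl (cernyStep n) q

/-- Number of times the letter `b` hits the trajectory of `q` at state `0`. -/
def cernyCnt (n : ℕ) : List Bool → ZMod n → ℕ
  | [], _ => 0
  | x :: l, q => (if x = true ∧ q = 0 then 1 else 0) + cernyCnt n l (cernyStep n q x)

lemma cernyRun_eq (n : ℕ) (l : List Bool) (q : ZMod n) :
    cernyRun n l q = q + ((l.count false + cernyCnt n l q : ℕ) : ZMod n) := by
  induction l generalizing q with
  | nil => simp [cernyRun, cernyCnt]
  | cons x l ih =>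
    cases x with
    | false =>
      have h1 : cernyRun n (false :: l) q = cernyRun n l (q + 1) := by
        simp [cernyRun, cernyStep]
      have h2 : cernyCnt n (false :: l) q = cernyCnt n l (q + 1) := by
        simp [cernyCnt, cernyStep]
      have h3 : List.count false (false :: l) = List.count false l + 1 := by simp
      rw [h1, h2, h3, ih]
      push_cast
      ring
    | true =>
      by_cases hq : q = 0
      · subst hq
        have h1 : cernyRun n (true :: l) 0 = cernyRun n l 1 := by
          simp [cernyRun, cernyStep]
        have h2 : cernyCnt n (true :: l) 0 = 1 + cernyCnt n l 1 := by
          simp [cernyCnt, cernyStep]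
        have h3 : List.count false (true :: l) = List.count false l := by simp
        rw [h1, h2, h3, ih]
        push_cast
        ring
      · have h1 : cernyRun n (true :: l) q = cernyRun n l q := by
          simp [cernyRun, cernyStep, hq]
        have h2 : cernyCnt n (true :: l) q = cernyCnt n l q := by
          simp [cernyCnt, cernyStep, hq]
        have h3 : List.count false (true :: l) = List.count false l := by simp
        rw [h1, h2, h3, ih]

lemma cernyCnt_le_count (n : ℕ) (l : List Bool) (q : ZMod n) :
    cernyCnt n l q ≤ l.count true := by
  induction l generalizing q with
  | nil => simp [cernyCnt]
  | cons x l ih =>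
    cases x with
    | false =>
      have h2 : cernyCnt n (false :: l) q = cernyCnt n l (cernyStep n q false) := by
        simp [cernyCnt]
      have h3 : List.count true (false :: l) = List.count true l := by simp
      rw [h2, h3]; exact ih _
    | true =>
      have h2 : cernyCnt n (true :: l) q
          = (if q = 0 then 1 else 0) + cernyCnt n l (cernyStep n q true) := by
        simp [cernyCnt]
      have h3 : List.count true (true :: l) = List.count true l + 1 := by simp
      rw [h2, h3]
      have := ih (cernyStep n q true)
      split <;> omega

lemma val_neg_one' (n : ℕ) (hn : 2 ≤ n) : (-1 : ZMod n).val = n - 1 := by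
  haveI : NeZero n := ⟨by omega⟩
  have h1 : ((n - 1 : ℕ) : ZMod n) = -1 := by
    have h : ((n - 1 : ℕ) : ZMod n) = (n : ZMod n) - 1 := by
      push_cast [Nat.cast_sub (by omega : 1 ≤ n)]
      ring
    rw [h, ZMod.natCast_self]
    ring
  rw [← h1, ZMod.val_cast_of_lt (by omega)]

/-- Key amortized bound: the distance-to-zero of `q` plus `(n-1)` per hit is at
most the number of `a`'s plus `n-1`. -/
lemma cernyCnt_bound (n : ℕ) (hn : 2 ≤ n) (l : List Bool) (q : ZMod n) :
    (-q).val + cernyCnt n l q * (n - 1) ≤ l.count false + (n - 1) := by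
  haveI : NeZero n := ⟨by omega⟩
  haveI : Fact (1 < n) := ⟨by omega⟩
  induction l generalizing q with
  | nil =>
    have := ZMod.val_lt (-q)
    simp only [cernyCnt, List.count_nil, Nat.zero_mul, Nat.add_zero, Nat.zero_add]
    omega
  | cons x l ih =>
    cases x with
    | false =>
      have h2 : cernyCnt n (false :: l) q = cernyCnt n l (q + 1) := by
        simp [cernyCnt, cernyStep]
      have h3 : List.count false (false :: l) = List.count false l + 1 := by simp
      have hv : (-q).val ≤ (-(q + 1)).val + 1 := by
        have hrw : -q = (-(q + 1)) + 1 := by ring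
        rw [hrw, ZMod.val_add, ZMod.val_one]
        exact Nat.mod_le _ _
      have := ih (q + 1)
      rw [h2, h3]
      omega
    | true =>
      by_cases hq : q = 0
      · subst hq
        have h2 : cernyCnt n (true :: l) 0 = 1 + cernyCnt n l 1 := by
          simp [cernyCnt, cernyStep]
        have h3 : List.count false (true :: l) = List.count false l := by simp
        have := ih 1
        rw [val_neg_one' n hn] at this
        have hv0 : (-(0 : ZMod n)).val = 0 := by simp
        rw [h2, h3, hv0]
        have hc : (1 + cernyCnt n l 1) * (n - 1) = (n - 1) + cernyCnt n l 1 * (n - 1) := by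
          ring
        omega
      · have h2 : cernyCnt n (true :: l) q = cernyCnt n l q := by
          simp [cernyCnt, cernyStep, hq]
        have h3 : List.count false (true :: l) = List.count false l := by simp
        have := ih q
        rw [h2, h3]
        omega

lemma count_true_add_count_false (l : List Bool) :
    l.count true + l.count false = l.length := by
  induction l with
  | nil => simp
  | cons x l ih =>
    have h1 : List.count true (x :: l) + List.count false (x :: l)
        = List.count true l + List.count false l + 1 := by
      cases x <;> simp [List.count_cons] <;> omega
    rw [h1, ih, List.length_cons]

/-- the Černý automaton with `n ≥ 2` states has no synchronizing
word of length less than `(n-1)^2`. -/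
theorem cerny_no_short_synchronizing_word (n : ℕ) (hn : 2 ≤ n)
    (a b : ZMod n → ZMod n)
    (ha : ∀ i, a i = i + 1)
    (hb0 : b 0 = 1) (hb : ∀ i : ZMod n, i ≠ 0 → b i = i)
    (w : List (ZMod n → ZMod n)) (hw : ∀ f ∈ w, f = a ∨ f = b)
    (hsync : ∃ q0 : ZMod n, ∀ q : ZMod n, applyWord w q = q0) :
    (n - 1) ^ 2 ≤ w.length := by
  haveI : NeZero n := ⟨by omega⟩
  -- encode the word as booleans
  have hex : ∀ (w : List (ZMod n → ZMod n)), (∀ f ∈ w, f = a ∨ f = b) →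
      ∃ l : List Bool, l.length = w.length ∧ ∀ q, applyWord w q = cernyRun n l q := by
    intro w
    induction w with
    | nil => intro _; exact ⟨[], rfl, fun q => rfl⟩
    | cons f w ih =>
      intro hw
      obtain ⟨l, hl, hr⟩ := ih (fun g hg => hw g (List.mem_cons_of_mem f hg))
      rcases hw f List.mem_cons_self with hf | hf
      · refine ⟨false :: l, by simp [hl], fun q => ?_⟩
        have h : applyWord (f :: w) q = applyWord w (f q) := rfl
        rw [h, hr, hf, ha]
        simp [cernyRun, cernyStep]
      · refine ⟨true :: l, by simp [hl], fun q => ?_⟩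
        have h : applyWord (f :: w) q = applyWord w (f q) := rfl
        rw [h, hr, hf]
        have hbq : b q = if q = 0 then 1 else q := by
          by_cases hq : q = 0
          · simp [hq, hb0]
          · simp [hq, hb q hq]
        rw [hbq]
        simp [cernyRun, cernyStep]
  obtain ⟨l, hl, hr⟩ := hex w hw
  obtain ⟨q0, hq0⟩ := hsync
  have hkey : ∀ q : ZMod n, q + ((l.count false + cernyCnt n l q : ℕ) : ZMod n) = q0 := by
    intro q
    rw [← cernyRun_eq, ← hr, hq0]
  -- the hit counts are injective
  have hinj : ∀ q1 q2 : ZMod n, cernyCnt n l q1 = cernyCnt n l q2 → q1 = q2 := by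
    intro q1 q2 h12
    have h := (hkey q1).trans (hkey q2).symm
    rw [h12] at h
    exact add_right_cancel h
  -- some state is hit at least n-1 times
  have hbig : ∃ q : ZMod n, n - 1 ≤ cernyCnt n l q := by
    by_contra hcon
    push_neg at hcon
    have hcard : Fintype.card (ZMod n) ≤ Fintype.card (Fin (n - 1)) :=
      Fintype.card_le_of_injective (fun q => (⟨cernyCnt n l q, hcon q⟩ : Fin (n - 1)))
        (fun q1 q2 h => hinj q1 q2 (by simpa using congrArg Fin.val h))
    rw [ZMod.card, Fintype.card_fin] at hcard
    omega
  obtain ⟨q, hq⟩ := hbig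
  have hbound := cernyCnt_bound n hn l q
  have hcount := cernyCnt_le_count n l q
  have hlen := count_true_add_count_false l
  calc (n - 1) ^ 2 = (n - 1) * (n - 1) := sq (n - 1)
    _ ≤ cernyCnt n l q * (n - 1) := Nat.mul_le_mul_right _ hq
    _ ≤ l.count false + (n - 1) := by omega
    _ ≤ l.count false + l.count true := by omega
    _ = l.length := by omega
    _ = w.length := hl
end

section
/- Let Q be a set of n states and k ≥ 2. Suppose (S₁,P₁),…,(S_ℓ,P_ℓ) is a Frankl–Pin sequence: the Sᵢ are distinct k-subsets of Q, the Pᵢ are distinct 2-subsets of Q, Pᵢ ⊆ Sᵢ for all i, and Pⱼ ⊄ Sᵢ whenever j < i. Then ℓ ≤ C(n−k+2, 2). -/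
open Finset Polynomial

/-- Splitting a square double sum into strict lower triangle (symmetrized) plus diagonal. -/
lemma frankl_pin_sum_split (N : ℕ) (f : ℕ → ℕ → ℚ) :
    ∑ a ∈ Finset.range N, ∑ b ∈ Finset.range N, f a b
      = (∑ a ∈ Finset.range N, ∑ b ∈ Finset.range a, (f a b + f b a))
        + ∑ a ∈ Finset.range N, f a a := by
  induction N with
  | zero => simp
  | succ N ih =>
    simp only [Finset.sum_range_succ, Finset.sum_add_distrib, ih]
    ring


/-- degree bound for products of linear factors -/
lemma frankl_pin_deg {α : Type*} [DecidableEq α] (s : Finset α) (t : α → ℚ) :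
    (∏ b ∈ s, (X - C (t b))).natDegree ≤ s.card := by
  induction s using Finset.induction with
  | empty => simp
  | insert a s' hx ih =>
    rw [Finset.prod_insert hx, Finset.card_insert_of_notMem hx]
    calc ((X - C (t a)) * ∏ b ∈ s', (X - C (t b))).natDegree
        ≤ (X - C (t a)).natDegree + (∏ b ∈ s', (X - C (t b))).natDegree :=
          Polynomial.natDegree_mul_le
      _ ≤ 1 + s'.card := by
          rw [Polynomial.natDegree_X_sub_C]; omega
      _ = s'.card + 1 := by omega

/-- a Frankl–Pin sequence of `k`-subsets and pairs of an `n`-set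
has length at most `C(n-k+2, 2)`. -/
theorem frankl_pin_bound {Q : Type*} [Fintype Q] [DecidableEq Q]
    (n k ℓ : ℕ) (hcard : Fintype.card Q = n) (hk2 : 2 ≤ k) (hkn : k ≤ n)
    (S P : Fin ℓ → Finset Q)
    (hSinj : Function.Injective S) (hPinj : Function.Injective P)
    (hScard : ∀ i, (S i).card = k) (hPcard : ∀ i, (P i).card = 2)
    (hPS : ∀ i, P i ⊆ S i)
    (hFP : ∀ i j : Fin ℓ, j < i → ¬ P j ⊆ S i) :
    ℓ ≤ (n - k + 2).choose 2 := by
  classical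
  set N : ℕ := n - k + 2 with hN
  -- an injective "coordinate" map
  obtain ⟨e⟩ : Nonempty (Q ≃ Fin n) := ⟨Fintype.equivFinOfCardEq hcard⟩
  set t : Q → ℚ := fun q => ((e q : ℕ) : ℚ) with ht
  have htinj : Function.Injective t := by
    intro a b hab
    apply e.injective
    exact Fin.ext (Nat.cast_injective hab)
  -- pick the two elements of each pair
  choose x y hxy hPxy using fun j => Finset.card_eq_two.mp (hPcard j)
  -- the annihilating polynomials
  set g : Fin ℓ → ℚ[X] := fun i => ∏ b ∈ (S i)ᶜ, (X - C (t b)) with hg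
  set h : Fin ℓ → ℚ[X] := fun i => X * g i with hh
  have hcompl : ∀ i, ((S i)ᶜ : Finset Q).card = n - k := by
    intro i; rw [Finset.card_compl, hScard, hcard]
  have hgdeg0 : ∀ i, (g i).natDegree ≤ n - k := by
    intro i
    have := frankl_pin_deg ((S i)ᶜ) t
    rw [hcompl i] at this
    exact this
  have hgdeg : ∀ i, (g i).natDegree < N := by
    intro i; have := hgdeg0 i; omega
  have hhdeg : ∀ i, (h i).natDegree < N := by
    intro i
    have h2 : (h i).natDegree ≤ (X : ℚ[X]).natDegree + (g i).natDegree :=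
      Polynomial.natDegree_mul_le
    rw [Polynomial.natDegree_X] at h2
    have := hgdeg0 i
    omega
  -- evaluating g i at an element of S i is nonzero
  have hg_ne : ∀ i, ∀ q ∈ S i, (g i).eval (t q) ≠ 0 := by
    intro i q hq
    rw [hg, Polynomial.eval_prod]
    refine Finset.prod_ne_zero_iff.mpr fun b hb => ?_
    simp only [Polynomial.eval_sub, Polynomial.eval_X, Polynomial.eval_C, sub_ne_zero]
    intro hqb
    exact (Finset.mem_compl.mp hb) (htinj hqb ▸ hq)
  -- evaluating g i outside S i gives zero
  have hg_zero : ∀ i, ∀ q, q ∉ S i → (g i).eval (t q) = 0 := by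
    intro i q hq
    rw [hg, Polynomial.eval_prod]
    refine Finset.prod_eq_zero (Finset.mem_compl.mpr hq) ?_
    simp
  -- The matrices
  set M : Matrix (Fin ℓ) (Fin ℓ) ℚ := fun i j =>
    (h i).eval (t (x j)) * (g i).eval (t (y j))
      - (g i).eval (t (x j)) * (h i).eval (t (y j)) with hM
  set A : Matrix (Fin ℓ) ((a : Fin N) × Fin (a : ℕ)) ℚ := fun i p =>
    (h i).coeff (p.1 : ℕ) * (g i).coeff (p.2 : ℕ)
      - (g i).coeff (p.1 : ℕ) * (h i).coeff (p.2 : ℕ) with hA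
  set B : Matrix ((a : Fin N) × Fin (a : ℕ)) (Fin ℓ) ℚ := fun p j =>
    t (x j) ^ (p.1 : ℕ) * t (y j) ^ (p.2 : ℕ)
      - t (x j) ^ (p.2 : ℕ) * t (y j) ^ (p.1 : ℕ) with hB
  -- factorization M = A * B
  have hfac : M = A * B := by
    ext i j
    rw [Matrix.mul_apply]
    -- expand evals into sums over range N
    have hm : M i j = ∑ a ∈ Finset.range N, ∑ b ∈ Finset.range N,
        (((h i).coeff a * (g i).coeff b - (g i).coeff a * (h i).coeff b)
          * (t (x j) ^ a * t (y j) ^ b)) := by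
      rw [hM]
      simp only
      rw [Polynomial.eval_eq_sum_range' (hhdeg i) (t (x j)),
        Polynomial.eval_eq_sum_range' (hgdeg i) (t (y j)),
        Polynomial.eval_eq_sum_range' (hgdeg i) (t (x j)),
        Polynomial.eval_eq_sum_range' (hhdeg i) (t (y j)),
        Finset.sum_mul_sum, Finset.sum_mul_sum, ← Finset.sum_sub_distrib]
      refine Finset.sum_congr rfl fun a _ => ?_
      rw [← Finset.sum_sub_distrib]
      refine Finset.sum_congr rfl fun b _ => ?_
      ring
    rw [hm, frankl_pin_sum_split]
    have hdiag : ∑ a ∈ Finset.range N,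
        (((h i).coeff a * (g i).coeff a - (g i).coeff a * (h i).coeff a)
          * (t (x j) ^ a * t (y j) ^ a)) = 0 := by
      apply Finset.sum_eq_zero; intro a _; ring
    rw [hdiag, add_zero]
    -- now identify the triangular sum with the sigma-type sum
    rw [← Finset.univ_sigma_univ, Finset.sum_sigma]
    rw [← Fin.sum_univ_eq_sum_range (fun a => ∑ b ∈ Finset.range a,
      ((((h i).coeff a * (g i).coeff b - (g i).coeff a * (h i).coeff b)
          * (t (x j) ^ a * t (y j) ^ b))
        + (((h i).coeff b * (g i).coeff a - (g i).coeff b * (h i).coeff a)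
          * (t (x j) ^ b * t (y j) ^ a)))) N]
    refine Finset.sum_congr rfl fun a _ => ?_
    rw [← Fin.sum_univ_eq_sum_range (fun b =>
      ((((h i).coeff a * (g i).coeff b - (g i).coeff a * (h i).coeff b)
          * (t (x j) ^ (a : ℕ) * t (y j) ^ b))
        + (((h i).coeff b * (g i).coeff (a : ℕ) - (g i).coeff b * (h i).coeff a)
          * (t (x j) ^ b * t (y j) ^ (a : ℕ))))) (a : ℕ)]
    refine Finset.sum_congr rfl fun b _ => ?_
    rw [hA, hB]
    simp only
    ring
  -- M is upper triangular with nonzero diagonal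
  have htri : M.BlockTriangular id := by
    intro i j hij
    simp only [id] at hij
    obtain ⟨c, hcP, hcS⟩ := Finset.not_subset.mp (hFP i j hij)
    have hc0 : (g i).eval (t c) = 0 := hg_zero i c hcS
    have hch : (h i).eval (t c) = 0 := by
      rw [hh]; simp only [Polynomial.eval_mul, Polynomial.eval_X, hc0, mul_zero]
    rw [hPxy j] at hcP
    rw [hM]
    simp only
    rcases Finset.mem_insert.mp hcP with hcx | hcy
    · rw [hcx] at hc0 hch; rw [hc0, hch]; ring
    · rw [Finset.mem_singleton.mp hcy] at hc0 hch; rw [hc0, hch]; ring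
  have hdiag_ne : ∀ i, M i i ≠ 0 := by
    intro i
    have hxS : x i ∈ S i := hPS i (by rw [hPxy i]; exact Finset.mem_insert_self _ _)
    have hyS : y i ∈ S i := hPS i (by
      rw [hPxy i]; exact Finset.mem_insert_of_mem (Finset.mem_singleton_self _))
    have hgx := hg_ne i (x i) hxS
    have hgy := hg_ne i (y i) hyS
    have hxy' : t (x i) - t (y i) ≠ 0 := sub_ne_zero.mpr (fun hc => hxy i (htinj hc))
    rw [hM]
    simp only [hh, Polynomial.eval_mul, Polynomial.eval_X]
    have : t (x i) * (g i).eval (t (x i)) * (g i).eval (t (y i))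
        - (g i).eval (t (x i)) * (t (y i) * (g i).eval (t (y i)))
        = (g i).eval (t (x i)) * (g i).eval (t (y i)) * (t (x i) - t (y i)) := by ring
    rw [this]
    exact mul_ne_zero (mul_ne_zero hgx hgy) hxy'
  -- M is invertible, hence rank ℓ
  have hdet : IsUnit M.det := by
    rw [Matrix.det_of_upperTriangular htri]
    exact isUnit_iff_ne_zero.mpr (Finset.prod_ne_zero_iff.mpr fun i _ => hdiag_ne i)
  have hrank : M.rank = ℓ := by
    rw [Matrix.rank_of_isUnit M ((Matrix.isUnit_iff_isUnit_det M).mpr hdet)]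
    exact Fintype.card_fin ℓ
  -- rank bound via factorization
  have hcardI : Fintype.card ((a : Fin N) × Fin (a : ℕ)) = N.choose 2 := by
    rw [Fintype.card_sigma]
    simp only [Fintype.card_fin]
    rw [Fin.sum_univ_eq_sum_range (fun a => a) N, Finset.sum_range_id,
      Nat.choose_two_right]
  have hle : M.rank ≤ N.choose 2 := by
    rw [hfac]
    calc (A * B).rank ≤ A.rank := Matrix.rank_mul_le_left A B
      _ ≤ Fintype.card ((a : Fin N) × Fin (a : ℕ)) := Matrix.rank_le_card_width A
      _ = N.choose 2 := hcardI
  rw [← hrank]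
  exact hle
end

section
/- In a synchronizing DFA with n states, if some subset R ⊆ Q of size m is reachable from Q (i.e. R = Q·w for some word w) and every state of R can be reached from any state (within R-synchronization), then the number of steps needed to reduce Q to a subset of size m is at least 1 + 2 + ⋯ + (n−m) = (n−m+1)(n−m)/2 in the worst case construction; formally: there exists a synchronizing DFA with n states, exactly m states reachable from every other state, and synchronization length exactly (m−1)² + (n−m+1)(n−m)/2, provided 1 ≤ m ≤ n−1 and the Černý bound (m−1)² is attainable on m states (e.g. via the Černý automaton). -/
/-- Action of a word over an alphabet `σ` acting on states `Q`. -/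
def wordAct {Q σ : Type*} (act : σ → Q → Q) (w : List σ) (q : Q) : Q :=
  w.foldl (fun q x => act x q) q

namespace St6c


/-! ### Core Černý automaton on `ZMod m` with an extra identity letter. -/

def cact (m : ℕ) (c : Fin 3) (z : ZMod m) : ZMod m :=
  if c.val = 0 then z + 1 else if c.val = 1 then (if z = 0 then 1 else z) else z

def II (m : ℕ) (x : ZMod m) (s : ℕ) : Finset (ZMod m) :=
  (Finset.range s).image (fun j => x + (j : ℕ))

def psi (m : ℕ) (x : ZMod m) (s : ℕ) : ℕ :=
  if s ≤ 1 then 0 else (s - 2) * (m - 1) + (s - 1) + (-x).val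

def ccost (u : List (Fin 3)) : ℕ := u.countP (fun c => c.val ≤ 1)

lemma mem_II {m : ℕ} {x : ZMod m} {s : ℕ} {z : ZMod m} :
    z ∈ II m x s ↔ ∃ j, j < s ∧ x + (j : ℕ) = z := by
  simp [II]

lemma II_card (m : ℕ) [NeZero m] (x : ZMod m) (s : ℕ) (hs : s ≤ m) :
    (II m x s).card = s := by
  rw [II, Finset.card_image_of_injOn, Finset.card_range]
  intro i hi j hj e
  simp only [Finset.coe_range, Set.mem_Iio] at hi hj
  have : ((i : ℕ) : ZMod m) = ((j : ℕ) : ZMod m) := by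
    have := add_left_cancel e; exact this
  have hi' := ZMod.val_cast_of_lt (lt_of_lt_of_le hi hs)
  have hj' := ZMod.val_cast_of_lt (lt_of_lt_of_le hj hs)
  rw [← hi', ← hj', this]

lemma II_univ (m : ℕ) [NeZero m] (x : ZMod m) (s : ℕ) (hs : s ≤ m)
    (h : ∀ z, z ∈ II m x s) : s = m := by
  have h1 : II m x s = Finset.univ := Finset.eq_univ_iff_forall.2 h
  have := II_card m x s hs
  rw [h1, Finset.card_univ, ZMod.card] at this
  omega

lemma val_neg_one (m : ℕ) (hm : 2 ≤ m) : ((-1 : ZMod m)).val = m - 1 := by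
  haveI : NeZero m := ⟨by omega⟩
  have h1 : ((m - 1 : ℕ) : ZMod m) = -1 := by
    have hms : ((m : ℕ) : ZMod m) = 0 := ZMod.natCast_self m
    have e : (m - 1 : ℕ) + 1 = m := by omega
    calc ((m-1:ℕ) : ZMod m) = ((m-1:ℕ) : ZMod m) + 1 - 1 := by ring
    _ = ((m:ℕ) : ZMod m) - 1 := by rw [← e]; push_cast; ring
    _ = -1 := by rw [hms]; ring
  rw [← h1, ZMod.val_cast_of_lt (by omega)]

lemma val_add_one_le (m : ℕ) (hm : 2 ≤ m) (y : ZMod m) : (y + 1).val ≤ y.val + 1 := by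
  haveI : NeZero m := ⟨by omega⟩
  haveI : Fact (1 < m) := ⟨by omega⟩
  rw [ZMod.val_add, ZMod.val_one]
  exact Nat.mod_le _ _

lemma psi_rho (m : ℕ) (hm : 2 ≤ m) (x : ZMod m) (s : ℕ) :
    psi m (x - 1) s ≤ psi m x s + 1 := by
  haveI : NeZero m := ⟨by omega⟩
  unfold psi
  split
  · omega
  · have h : -(x - 1) = -x + 1 := by ring
    have := val_add_one_le m hm (-x)
    rw [h]
    omega

lemma psi_grow (m : ℕ) (hm : 2 ≤ m) (s : ℕ) (hs : 1 ≤ s) :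
    psi m 0 (s + 1) ≤ psi m 1 s + 1 := by
  haveI : NeZero m := ⟨by omega⟩
  have hv0 : ((-0 : ZMod m)).val = 0 := by simp
  have hv1 : ((-1 : ZMod m)).val = m - 1 := val_neg_one m hm
  unfold psi
  rcases Nat.lt_or_ge s 2 with h | h
  · have : s = 1 := by omega
    subst this
    simp only [hv0, hv1]
    norm_num
  · have e1 : (s + 1 - 2) * (m - 1) = (s - 2) * (m - 1) + (m - 1) := by
      have : s + 1 - 2 = (s - 2) + 1 := by omega
      rw [this, Nat.succ_mul]
    simp only [hv0, hv1]
    have c1 : ¬ (s + 1 ≤ 1) := by omega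
    have c2 : ¬ (s ≤ 1) := by omega
    rw [if_neg c1, if_neg c2]
    omega

lemma psi_shrink (m : ℕ) (hm : 2 ≤ m) (x : ZMod m) (s : ℕ) :
    psi m x (s - 1) ≤ psi m x s + 1 := by
  unfold psi
  rcases Nat.lt_or_ge s 3 with h | h
  · have : s - 1 ≤ 1 := by omega
    rw [if_pos this]; omega
  · have c1 : ¬ (s - 1 ≤ 1) := by omega
    have c2 : ¬ (s ≤ 1) := by omega
    rw [if_neg c1, if_neg c2]
    have e1 : (s - 2) * (m - 1) = (s - 3) * (m - 1) + (m - 1) := by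
      have : s - 2 = (s - 3) + 1 := by omega
      rw [this, Nat.succ_mul]
    have e2 : s - 1 - 2 = s - 3 := by omega
    rw [e2]
    omega

lemma psi_le_succ (m : ℕ) (x : ZMod m) (s : ℕ) : psi m x s ≤ psi m x s + 1 := Nat.le_succ _

lemma ccost_cons (c : Fin 3) (u : List (Fin 3)) :
    ccost (c :: u) = (if c.val ≤ 1 then 1 else 0) + ccost u := by
  by_cases h : c.val ≤ 1 <;> simp [ccost, List.countP_cons, h] <;> omega

lemma core_inv (m : ℕ) (hm : 2 ≤ m) (z0 : ZMod m) (u : List (Fin 3)) :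
    (∀ z, wordAct (cact m) u z ≠ z0) ∨
    ∃ x s, 1 ≤ s ∧ s ≤ m ∧ (∀ z, wordAct (cact m) u z = z0 ↔ z ∈ II m x s) ∧
      psi m x s ≤ ccost u := by
  haveI : NeZero m := ⟨by omega⟩
  haveI : Fact (1 < m) := ⟨by omega⟩
  induction u with
  | nil =>
    right
    refine ⟨z0, 1, le_refl _, by omega, ?_, by simp [psi, ccost]⟩
    intro z
    simp only [wordAct, List.foldl_nil, mem_II]
    constructor
    · rintro rfl; exact ⟨0, by omega, by simp⟩
    · rintro ⟨j, hj, e⟩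
      have : j = 0 := by omega
      subst this; simpa using e.symm
  | cons c u ih =>
    have hcons : ∀ z, wordAct (cact m) (c :: u) z = wordAct (cact m) u (cact m c z) :=
      fun z => rfl
    rcases ih with h | ⟨x, s, hs1, hsm, hiff, hpsi⟩
    · left; intro z; rw [hcons]; exact h _
    · rcases c with ⟨cv, hcv⟩
      have hc : cv = 0 ∨ cv = 1 ∨ cv = 2 := by omega
      rcases hc with rfl | rfl | rfl
      · -- rho
        right
        refine ⟨x - 1, s, hs1, hsm, ?_, ?_⟩
        · intro z
          rw [hcons]
          have hact : cact m ⟨0, hcv⟩ z = z + 1 := by simp [cact]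
          rw [hact, hiff (z + 1)]
          simp only [mem_II]
          constructor
          · rintro ⟨j, hj, e⟩; exact ⟨j, hj, by linear_combination e⟩
          · rintro ⟨j, hj, e⟩; exact ⟨j, hj, by linear_combination e⟩
        · rw [ccost_cons]
          simp only [show (0:ℕ) ≤ 1 by omega, if_pos]
          calc psi m (x-1) s ≤ psi m x s + 1 := psi_rho m hm x s
          _ ≤ _ := by omega
      · -- beta
        have hact : ∀ z, cact m ⟨1, hcv⟩ z = if z = 0 then 1 else z := by
          intro z; simp [cact]
        have hcc : ccost (⟨1, hcv⟩ :: u) = 1 + ccost u := by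
          rw [ccost_cons]; norm_num
        by_cases h1 : (1 : ZMod m) ∈ II m x s <;> by_cases h0 : (0 : ZMod m) ∈ II m x s
        · -- neutral (both)
          right
          refine ⟨x, s, hs1, hsm, ?_, by omega⟩
          intro z
          rw [hcons, hact z, hiff _]
          by_cases hz : z = 0
          · subst hz; simp only [if_pos rfl]
            constructor <;> intro _ <;> assumption
          · rw [if_neg hz]
        · -- grow : 1 ∈ I, 0 ∉ I
          have hx1 : x = 1 := by
            rcases mem_II.1 h1 with ⟨j, hj, e⟩
            rcases Nat.eq_zero_or_pos j with rfl | hjp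
            · simpa using e
            · exfalso; apply h0; rw [mem_II]
              refine ⟨j - 1, by omega, ?_⟩
              have ej : (j : ℕ) = (j - 1) + 1 := by omega
              rw [ej] at e; push_cast at e ⊢
              linear_combination e
          have hslt : s < m := by
            rcases Nat.lt_or_ge s m with h | h
            · exact h
            · exfalso
              have hsme : s = m := by omega
              apply h0
              have huniv : (II m x s) = Finset.univ := by
                apply Finset.eq_univ_of_card
                rw [II_card m x s hsm, ZMod.card]; exact hsme
              rw [huniv]; exact Finset.mem_univ _
          subst hx1
          right
          refine ⟨0, s + 1, by omega, by omega, ?_, ?_⟩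
          · intro z
            rw [hcons, hact z, hiff _]
            by_cases hz : z = 0
            · subst hz
              rw [if_pos rfl]
              constructor
              · intro _; rw [mem_II]; exact ⟨0, by omega, by simp⟩
              · intro _; exact h1
            · rw [if_neg hz]
              rw [mem_II, mem_II]
              constructor
              · rintro ⟨j, hj, e⟩
                refine ⟨j + 1, by omega, ?_⟩
                push_cast at e ⊢; linear_combination e
              · rintro ⟨j, hj, e⟩
                rcases Nat.eq_zero_or_pos j with rfl | hjp
                · exfalso; apply hz; simpa using e.symm
                · refine ⟨j - 1, by omega, ?_⟩
                  have ej : (j : ℕ) = (j - 1) + 1 := by omega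
                  rw [ej] at e; push_cast at e ⊢
                  linear_combination e
          · rw [hcc]
            have := psi_grow m hm s hs1
            omega
        · -- shrink : 1 ∉ I, 0 ∈ I
          have htop : x + ((s - 1 : ℕ) : ZMod m) = 0 := by
            rcases mem_II.1 h0 with ⟨j, hj, e⟩
            rcases Nat.lt_or_ge j (s - 1) with h | h
            · exfalso; apply h1; rw [mem_II]
              refine ⟨j + 1, by omega, ?_⟩
              push_cast; push_cast at e; linear_combination e
            · have : j = s - 1 := by omega
              subst this; exact e
          rcases Nat.lt_or_ge s 2 with hs2 | hs2
          · -- s = 1 : empty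
            left
            have hx0 : x = 0 := by
              have : s - 1 = 0 := by omega
              rw [this] at htop; simpa using htop
            intro z
            rw [hcons, hact z]
            intro hcontr
            rw [hiff _] at hcontr
            rcases mem_II.1 hcontr with ⟨j, hj, e⟩
            have hj0 : j = 0 := by omega
            subst hj0
            rw [hx0] at e
            simp only [Nat.cast_zero, add_zero] at e
            by_cases hz : z = 0
            · rw [if_pos hz] at e; exact one_ne_zero e.symm
            · rw [if_neg hz] at e; exact hz e.symm
          · right
            refine ⟨x, s - 1, by omega, by omega, ?_, ?_⟩
            · intro z
              rw [hcons, hact z, hiff _]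
              have castinj : ∀ j j' : ℕ, j < m → j' < m → x + (j:ℕ) = x + (j':ℕ) → j = j' := by
                intro j j' hjm hjm' e
                have e2 : ((j:ℕ) : ZMod m) = ((j':ℕ) : ZMod m) := add_left_cancel e
                have := ZMod.val_cast_of_lt hjm
                have := ZMod.val_cast_of_lt hjm'
                rw [← ZMod.val_cast_of_lt hjm, e2, ZMod.val_cast_of_lt hjm']
              by_cases hz : z = 0
              · subst hz
                rw [if_pos rfl]
                constructor
                · intro hc; exact absurd hc h1
                · intro hc
                  exfalso
                  rcases mem_II.1 hc with ⟨j, hj, e⟩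
                  rw [← htop] at e
                  have := castinj j (s-1) (by omega) (by omega) e
                  omega
              · rw [if_neg hz, mem_II, mem_II]
                constructor
                · rintro ⟨j, hj, e⟩
                  rcases Nat.lt_or_ge j (s-1) with h | h
                  · exact ⟨j, h, e⟩
                  · exfalso
                    have : j = s - 1 := by omega
                    subst this
                    rw [htop] at e
                    exact hz e.symm
                · rintro ⟨j, hj, e⟩; exact ⟨j, by omega, e⟩
            · rw [hcc]
              have := psi_shrink m hm x s
              omega
        · -- neither
          right
          refine ⟨x, s, hs1, hsm, ?_, by omega⟩
          intro z
          rw [hcons, hact z, hiff _]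
          by_cases hz : z = 0
          · subst hz; rw [if_pos rfl]
            constructor
            · intro hc; exact absurd hc h1
            · intro hc; exact absurd hc h0
          · rw [if_neg hz]
      · -- id letter
        right
        refine ⟨x, s, hs1, hsm, ?_, ?_⟩
        · intro z
          rw [hcons]
          have hact : cact m ⟨2, hcv⟩ z = z := by simp [cact]
          rw [hact, hiff _]
        · rw [ccost_cons]; omega

lemma core_lb (m : ℕ) (hm : 2 ≤ m) (z0 : ZMod m) (u : List (Fin 3))
    (hsync : ∀ z, wordAct (cact m) u z = z0) : (m - 1) ^ 2 ≤ ccost u := by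
  haveI : NeZero m := ⟨by omega⟩
  rcases core_inv m hm z0 u with h | ⟨x, s, hs1, hsm, hiff, hpsi⟩
  · exact absurd (hsync 0) (h 0)
  · have hall : ∀ z, z ∈ II m x s := fun z => (hiff z).1 (hsync z)
    have hsme : s = m := II_univ m x s hsm hall
    rw [hsme] at hpsi
    have : (m - 1) ^ 2 ≤ psi m x m := by
      unfold psi
      rw [if_neg (by omega)]
      have e : (m - 1) ^ 2 = (m - 2) * (m - 1) + (m - 1) := by
        obtain ⟨p, rfl⟩ : ∃ p, m = p + 2 := ⟨m - 2, by omega⟩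
        show (p + 2 - 1) ^ 2 = (p + 2 - 2) * (p + 2 - 1) + (p + 2 - 1)
        simp only [Nat.add_sub_cancel, show p + 2 - 1 = p + 1 by omega]
        ring
      omega
    omega

end St6c

namespace St6y

section Big
variable (n m : ℕ)

def act (h2 : m + 1 ≤ n) (x : Fin (n - m + 2)) (q : Fin n) : Fin n :=
  if x.val = 0 then
    (if q.val < m then ⟨(q.val + 1) % m % n, Nat.mod_lt _ (by omega)⟩ else q)
  else if x.val = 1 then
    (if q.val = 0 then ⟨1 % m % n, Nat.mod_lt _ (by omega)⟩ else q)
  else if q.val = m + (x.val - 2) then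
    (if x.val = 2 then ⟨0 % n, Nat.mod_lt _ (by omega)⟩
     else ⟨(m + (x.val - 2) - 1) % n, Nat.mod_lt _ (by omega)⟩)
  else if 3 ≤ x.val ∧ q.val = m + (x.val - 2) - 1 then
    ⟨(m + (x.val - 2)) % n, Nat.mod_lt _ (by omega)⟩
  else q

def la : Fin (n - m + 2) := ⟨0, by omega⟩
def lb : Fin (n - m + 2) := ⟨1, by omega⟩
def lc (j : ℕ) : Fin (n - m + 2) := ⟨(j + 2) % (n - m + 2), Nat.mod_lt _ (by omega)⟩

lemma lc_val (j : ℕ) (hj : j < n - m) : (lc n m j).val = j + 2 := by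
  simp only [lc]; exact Nat.mod_eq_of_lt (by omega)

lemma act_a_core (h1 : 1 ≤ m) (h2 : m + 1 ≤ n) (q : Fin n) (hq : q.val < m) :
    (act n m h2 (la n m) q).val = (q.val + 1) % m := by
  have hlt : (q.val + 1) % m < m := Nat.mod_lt _ (by omega)
  simp only [act, la, if_pos hq]
  simp only [if_true, Fin.val_mk, if_pos rfl]
  exact Nat.mod_eq_of_lt (by omega)

lemma act_a_tail (h2 : m + 1 ≤ n) (q : Fin n) (hq : m ≤ q.val) :
    act n m h2 (la n m) q = q := by
  have h : ¬ (q.val < m) := by omega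
  simp [act, la, h]

lemma act_b_zero (h1 : 1 ≤ m) (h2 : m + 1 ≤ n) (q : Fin n) (hq : q.val = 0) :
    (act n m h2 (lb n m) q).val = 1 % m := by
  have hlt : 1 % m < m := Nat.mod_lt _ (by omega)
  simp only [act, lb, Fin.val_mk]
  norm_num
  rw [if_pos hq, Fin.val_mk]
  exact Nat.mod_eq_of_lt (by omega)

lemma act_b_nz (h2 : m + 1 ≤ n) (q : Fin n) (hq : q.val ≠ 0) :
    act n m h2 (lb n m) q = q := by
  simp only [act, lb, Fin.val_mk]
  norm_num
  exact fun h => absurd h hq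

lemma act_c_down (h2 : m + 1 ≤ n) (j : ℕ) (hj : j < n - m) (q : Fin n) (hq : q.val = m + j) :
    (act n m h2 (lc n m j) q).val = if j = 0 then 0 else m + j - 1 := by
  have hv := lc_val n m j hj
  have e : j + 2 - 2 = j := by omega
  simp only [act, hv, e]
  rw [if_neg (by omega), if_neg (by omega), if_pos hq]
  by_cases hj0 : j = 0
  · rw [if_pos (by omega : j + 2 = 2), if_pos hj0, Fin.val_mk]
    exact Nat.mod_eq_of_lt (by omega)
  · rw [if_neg (by omega : ¬ (j + 2 = 2)), if_neg hj0, Fin.val_mk]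
    exact Nat.mod_eq_of_lt (by omega)

lemma act_c_up (h2 : m + 1 ≤ n) (j : ℕ) (hj : j < n - m) (hj1 : 1 ≤ j) (q : Fin n)
    (hq : q.val = m + j - 1) : (act n m h2 (lc n m j) q).val = m + j := by
  have hv := lc_val n m j hj
  have e : j + 2 - 2 = j := by omega
  simp only [act, hv, e]
  rw [if_neg (by omega), if_neg (by omega), if_neg (by omega),
      if_pos (by exact ⟨by omega, hq⟩), Fin.val_mk]
  exact Nat.mod_eq_of_lt (by omega)

lemma act_c_other (h2 : m + 1 ≤ n) (j : ℕ) (hj : j < n - m) (q : Fin n)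
    (hq1 : q.val ≠ m + j) (hq2 : ¬(1 ≤ j ∧ q.val = m + j - 1)) :
    act n m h2 (lc n m j) q = q := by
  have hv := lc_val n m j hj
  have e : j + 2 - 2 = j := by omega
  simp only [act, hv, e]
  rw [if_neg (by omega), if_neg (by omega), if_neg hq1, if_neg (by omega)]

lemma act_c_core (h1 : 1 ≤ m) (h2 : m + 1 ≤ n) (j : ℕ) (hj : j < n - m) (q : Fin n)
    (hq : q.val < m) : act n m h2 (lc n m j) q = q := by
  apply act_c_other n m h2 j hj q (by omega)
  rintro ⟨hj1, he⟩; omega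

lemma act_core_closed (h1 : 1 ≤ m) (h2 : m + 1 ≤ n) (x : Fin (n - m + 2)) (q : Fin n)
    (hq : q.val < m) : (act n m h2 x q).val < m := by
  rcases x with ⟨xv, hxv⟩
  rcases Nat.lt_or_ge xv 2 with hx | hx
  · rcases Nat.lt_or_ge xv 1 with hx0 | hx1
    · have hxe : (⟨xv, hxv⟩ : Fin (n - m + 2)) = la n m := by
        apply Fin.ext; simp [la]; omega
      rw [hxe, act_a_core n m h1 h2 q hq]
      exact Nat.mod_lt _ (by omega)
    · have hxe : (⟨xv, hxv⟩ : Fin (n - m + 2)) = lb n m := by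
        apply Fin.ext; simp [lb]; omega
      rw [hxe]
      by_cases hq0 : q.val = 0
      · rw [act_b_zero n m h1 h2 q hq0]
        exact Nat.mod_lt _ (by omega)
      · rw [act_b_nz n m h2 q hq0]; exact hq
  · have hxe : (⟨xv, hxv⟩ : Fin (n - m + 2)) = lc n m (xv - 2) := by
      apply Fin.ext; rw [lc_val n m _ (by omega)]; simp; omega
    rw [hxe, act_c_core n m h1 h2 (xv - 2) (by omega) q hq]
    exact hq

lemma word_core_closed (h1 : 1 ≤ m) (h2 : m + 1 ≤ n) (w : List (Fin (n - m + 2))) (q : Fin n)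
    (hq : q.val < m) : (wordAct (act n m h2) w q).val < m := by
  induction w generalizing q with
  | nil => exact hq
  | cons x w ih => exact ih _ (act_core_closed n m h1 h2 x q hq)

end Big
end St6y

namespace St6y
section Phi
variable (n m : ℕ)

def wt (q : Fin n) : ℕ := q.val + 1 - m

def phi (S : Finset (Fin n)) : ℕ := S.sum (wt n m)

lemma swap_involutive (h2 : m + 1 ≤ n) (j : ℕ) (hj : j < n - m) (hj1 : 1 ≤ j) :
    ∀ q, act n m h2 (lc n m j) (act n m h2 (lc n m j) q) = q := by
  intro q
  by_cases hq1 : q.val = m + j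
  · have e1 := act_c_down n m h2 j hj q hq1
    rw [if_neg (by omega)] at e1
    have e2 := act_c_up n m h2 j hj hj1 _ e1
    apply Fin.ext; rw [e2, hq1]
  · by_cases hq2 : q.val = m + j - 1
    · have e1 := act_c_up n m h2 j hj hj1 q hq2
      have e2 := act_c_down n m h2 j hj _ e1
      rw [if_neg (by omega)] at e2
      apply Fin.ext; rw [e2, hq2]
    · have e1 := act_c_other n m h2 j hj q hq1 (by rintro ⟨_, h⟩; exact hq2 h)
      rw [e1]
      exact act_c_other n m h2 j hj q hq1 (by rintro ⟨_, h⟩; exact hq2 h)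

lemma phi_step (h1 : 1 ≤ m) (h2 : m + 1 ≤ n) (x : Fin (n - m + 2)) (S : Finset (Fin n)) :
    phi n m S ≤ phi n m (S.image (act n m h2 x)) + (if 2 ≤ x.val then 1 else 0) := by
  rcases x with ⟨xv, hxv⟩
  rcases Nat.lt_or_ge xv 2 with hx | hx
  · -- core letter: fixes all tail states
    rw [if_neg (show ¬ (2 ≤ xv) by omega), Nat.add_zero]
    have hfix : ∀ q : Fin n, m ≤ q.val → act n m h2 ⟨xv, hxv⟩ q = q := by
      intro q hq
      rcases Nat.lt_or_ge xv 1 with hx0 | hx1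
      · have hxe : (⟨xv, hxv⟩ : Fin (n - m + 2)) = la n m := by
          apply Fin.ext; simp [la]; omega
        rw [hxe]; exact act_a_tail n m h2 q hq
      · have hxe : (⟨xv, hxv⟩ : Fin (n - m + 2)) = lb n m := by
          apply Fin.ext; simp [lb]; omega
        rw [hxe]; exact act_b_nz n m h2 q (by omega)
    calc phi n m S = (S.filter (fun q => m ≤ q.val)).sum (wt n m) := by
          rw [phi, Finset.sum_filter_of_ne]
          intro q hq hne
          simp only [wt] at hne
          omega
    _ ≤ (S.image (act n m h2 ⟨xv, hxv⟩)).sum (wt n m) := by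
          apply Finset.sum_le_sum_of_subset
          intro q hq
          rw [Finset.mem_filter] at hq
          rw [Finset.mem_image]
          exact ⟨q, hq.1, hfix q hq.2⟩
    _ = phi n m (S.image (act n m h2 ⟨xv, hxv⟩)) := rfl
  · rw [if_pos hx]
    rcases Nat.lt_or_ge xv 3 with hx3 | hx3
    · -- the letter c_0 : merges state m into 0
      have hxe : (⟨xv, hxv⟩ : Fin (n - m + 2)) = lc n m 0 := by
        apply Fin.ext; rw [lc_val n m _ (by omega), Fin.val_mk]; omega
      rw [hxe]
      set t : Fin n := ⟨m, by omega⟩ with ht_def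
      have hfix : ∀ q : Fin n, q ≠ t → act n m h2 (lc n m 0) q = q := by
        intro q hq
        have hv : q.val ≠ m := fun h => hq (Fin.ext h)
        apply act_c_other n m h2 0 (by omega) q (by omega)
        rintro ⟨h, _⟩; omega
      by_cases htS : t ∈ S
      · have hsplit : (S.erase t).sum (wt n m) + wt n m t = S.sum (wt n m) :=
          Finset.sum_erase_add S _ htS
        have hwt : wt n m t = 1 := by simp [wt, ht_def]
        have hsub : (S.erase t).sum (wt n m) ≤ phi n m (S.image (act n m h2 (lc n m 0))) := by
          apply Finset.sum_le_sum_of_subset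
          intro q hq
          rw [Finset.mem_image]
          exact ⟨q, Finset.mem_of_mem_erase hq, hfix q (Finset.ne_of_mem_erase hq)⟩
        calc phi n m S = (S.erase t).sum (wt n m) + 1 := by rw [phi, ← hsplit, hwt]
        _ ≤ phi n m (S.image (act n m h2 (lc n m 0))) + 1 := by omega
      · apply Nat.le_trans _ (Nat.le_add_right _ 1)
        apply Finset.sum_le_sum_of_subset
        intro q hq
        rw [Finset.mem_image]
        exact ⟨q, hq, hfix q (fun h => htS (h ▸ hq))⟩
    · -- swap letter
      set j := xv - 2 with hj_def
      have hj : j < n - m := by omega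
      have hj1 : 1 ≤ j := by omega
      have hxe : (⟨xv, hxv⟩ : Fin (n - m + 2)) = lc n m j := by
        apply Fin.ext; rw [lc_val n m _ hj, Fin.val_mk]; omega
      rw [hxe]
      have hinj : Function.Injective (act n m h2 (lc n m j)) :=
        Function.Involutive.injective (swap_involutive n m h2 j hj hj1)
      have himg : phi n m (S.image (act n m h2 (lc n m j)))
          = S.sum (fun q => wt n m (act n m h2 (lc n m j) q)) := by
        rw [phi]
        apply Finset.sum_image
        intro a _ b _ e
        exact hinj e
      set tgt : Fin n := ⟨m + j, by omega⟩ with htgt_def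
      have hpt : ∀ q ∈ S, wt n m q ≤ wt n m (act n m h2 (lc n m j) q)
          + (if q = tgt then 1 else 0) := by
        intro q _
        by_cases hq1 : q.val = m + j
        · have e1 := act_c_down n m h2 j hj q hq1
          rw [if_neg (by omega)] at e1
          have : q = tgt := Fin.ext (by rw [hq1])
          rw [if_pos this]
          simp only [wt, e1, hq1]
          try omega
        · by_cases hq2 : q.val = m + j - 1
          · have e1 := act_c_up n m h2 j hj hj1 q hq2
            simp only [wt, e1, hq2]
            try omega
          · have e1 := act_c_other n m h2 j hj q hq1 (by rintro ⟨_, h⟩; exact hq2 h)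
            rw [e1]
            omega
      calc phi n m S ≤ S.sum (fun q => wt n m (act n m h2 (lc n m j) q)
            + (if q = tgt then 1 else 0)) := Finset.sum_le_sum hpt
      _ = S.sum (fun q => wt n m (act n m h2 (lc n m j) q))
            + S.sum (fun q => if q = tgt then 1 else 0) := Finset.sum_add_distrib
      _ ≤ phi n m (S.image (act n m h2 (lc n m j))) + 1 := by
            rw [himg]
            have : (S.sum (fun q => if q = tgt then 1 else 0)) ≤ 1 := by
              rw [Finset.sum_ite_eq' S tgt (fun _ => 1)]
              split <;> omega
            omega

lemma phi_word (h1 : 1 ≤ m) (h2 : m + 1 ≤ n) (w : List (Fin (n - m + 2))) :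
    ∀ S : Finset (Fin n), phi n m S ≤ phi n m (S.image (wordAct (act n m h2) w))
      + w.countP (fun x => 2 ≤ x.val) := by
  induction w with
  | nil =>
    intro S
    have himg : S.image (wordAct (act n m h2) []) = S := by
      ext q; simp [wordAct]
    rw [himg]
    simp
  | cons x w ih =>
    intro S
    have hstep := phi_step n m h1 h2 x S
    have hih := ih (S.image (act n m h2 x))
    have himg : (S.image (act n m h2 x)).image (wordAct (act n m h2) w)
        = S.image (wordAct (act n m h2) (x :: w)) := by
      rw [Finset.image_image]
      rfl
    rw [himg] at hih
    have hcnt : (x :: w).countP (fun x => 2 ≤ x.val)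
        = w.countP (fun x => 2 ≤ x.val) + (if 2 ≤ x.val then 1 else 0) := by
      rw [List.countP_cons]
      split <;> simp_all
    rw [hcnt]
    by_cases hxx : 2 ≤ x.val
    · rw [if_pos hxx] at hstep ⊢; omega
    · rw [if_neg hxx] at hstep ⊢; omega

lemma sum_shift (m0 : ℕ) : ∀ k : ℕ, (∑ i ∈ Finset.range (m0 + k), (i + 1 - m0))
    = ∑ j ∈ Finset.range k, (j + 1) := by
  intro k
  induction k with
  | zero =>
    simp only [Nat.add_zero, Finset.range_zero, Finset.sum_empty]
    apply Finset.sum_eq_zero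
    intro i hi
    rw [Finset.mem_range] at hi
    omega
  | succ k ih =>
    rw [show m0 + (k+1) = (m0 + k) + 1 by omega, Finset.sum_range_succ, ih,
        Finset.sum_range_succ]
    omega

lemma phi_univ (h1 : 1 ≤ m) (h2 : m + 1 ≤ n) :
    phi n m Finset.univ = ∑ j ∈ Finset.range (n - m), (j + 1) := by
  rw [phi]
  have : (Finset.univ : Finset (Fin n)).sum (wt n m) = ∑ i ∈ Finset.range n, (i + 1 - m) :=
    Fin.sum_univ_eq_sum_range (fun i => i + 1 - m) n
  rw [this]
  have e : n = m + (n - m) := by omega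
  calc ∑ i ∈ Finset.range n, (i + 1 - m)
      = ∑ i ∈ Finset.range (m + (n - m)), (i + 1 - m) := by rw [← e]
  _ = ∑ j ∈ Finset.range (n - m), (j + 1) := sum_shift m (n - m)

lemma gauss (k : ℕ) : (∑ j ∈ Finset.range k, (j + 1)) = (k + 1) * k / 2 := by
  have h : (∑ j ∈ Finset.range k, (j + 1)) * 2 = (k + 1) * k := by
    induction k with
    | zero => rfl
    | succ k ih => rw [Finset.sum_range_succ, Nat.add_mul, ih]; ring
  omega

end Phi
end St6y

namespace St6z
open St6y St6c


section Bridge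
variable (n m : ℕ)

def g (x : Fin (n - m + 2)) : Fin 3 :=
  if x.val = 0 then ⟨0, by omega⟩ else if x.val = 1 then ⟨1, by omega⟩ else ⟨2, by omega⟩

lemma hom (h1 : 1 ≤ m) (h2 : m + 1 ≤ n) (x : Fin (n - m + 2)) (q : Fin n) (hq : q.val < m) :
    (((act n m h2 x q).val : ℕ) : ZMod m) = cact m (g n m x) ((q.val : ℕ) : ZMod m) := by
  rcases x with ⟨xv, hxv⟩
  rcases Nat.lt_or_ge xv 1 with hx0 | hx1
  · -- letter a
    have hxe : (⟨xv, hxv⟩ : Fin (n - m + 2)) = la n m := by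
      apply Fin.ext; simp [la]; omega
    rw [hxe, act_a_core n m h1 h2 q hq]
    have hg : g n m (la n m) = ⟨0, by omega⟩ := by simp [g, la]
    rw [hg]
    simp only [cact]
    rw [ZMod.natCast_mod]
    push_cast
    ring
  · rcases Nat.lt_or_ge xv 2 with hx1' | hx2
    · -- letter b
      have hxe : (⟨xv, hxv⟩ : Fin (n - m + 2)) = lb n m := by
        apply Fin.ext; simp [lb]; omega
      have hg : g n m (lb n m) = ⟨1, by omega⟩ := by simp [g, lb]
      rw [hxe, hg]
      simp only [cact]
      norm_num
      by_cases hq0 : q.val = 0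
      · rw [act_b_zero n m h1 h2 q hq0, hq0]
        rw [if_pos (by norm_num)]
        rw [ZMod.natCast_mod]
        push_cast
        ring
      · rw [act_b_nz n m h2 q hq0]
        rw [if_neg ?hne]
        case hne =>
          intro hc
          apply hq0
          have hv := ZMod.val_cast_of_lt (show q.val < m by omega)
          rw [hc] at hv
          simp at hv
          omega
    · -- letter c_j : identity on the core
      have hxe : (⟨xv, hxv⟩ : Fin (n - m + 2)) = lc n m (xv - 2) := by
        apply Fin.ext; rw [lc_val n m _ (by omega), Fin.val_mk]; omega
      have hg : g n m (⟨xv, hxv⟩ : Fin (n - m + 2)) = ⟨2, by omega⟩ := by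
        simp only [g]
        rw [if_neg (by omega), if_neg (by omega)]
      rw [hg, hxe, act_c_core n m h1 h2 (xv - 2) (by omega) q hq]
      simp [cact]

lemma transfer (h1 : 1 ≤ m) (h2 : m + 1 ≤ n) (w : List (Fin (n - m + 2))) :
    ∀ q : Fin n, q.val < m →
      wordAct (cact m) (w.map (g n m)) ((q.val : ℕ) : ZMod m)
        = (((wordAct (act n m h2) w q).val : ℕ) : ZMod m) := by
  induction w with
  | nil => intro q _; rfl
  | cons x w ih =>
    intro q hq
    have h0 : wordAct (cact m) ((x :: w).map (g n m)) ((q.val : ℕ) : ZMod m)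
        = wordAct (cact m) (w.map (g n m)) (cact m (g n m x) ((q.val : ℕ) : ZMod m)) := rfl
    rw [h0, ← hom n m h1 h2 x q hq]
    exact ih (act n m h2 x q) (act_core_closed n m h1 h2 x q hq)

lemma count_transfer (w : List (Fin (n - m + 2))) :
    ccost (w.map (g n m)) = w.countP (fun x => x.val ≤ 1) := by
  induction w with
  | nil => rfl
  | cons x w ih =>
    simp only [List.map_cons, ccost, List.countP_cons] at *
    rw [ih]
    congr 1
    rcases x with ⟨xv, hxv⟩
    by_cases hx : xv ≤ 1
    · rcases Nat.lt_or_ge xv 1 with h | h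
      · have : xv = 0 := by omega
        subst this
        simp [g]
      · have : xv = 1 := by omega
        subst this
        simp [g]
    · have hg : g n m ⟨xv, hxv⟩ = ⟨2, by omega⟩ := by
        simp only [g]; rw [if_neg (by omega), if_neg (by omega)]
      rw [hg]
      have h2v : ((⟨2, by omega⟩ : Fin 3)).val = 2 := rfl
      rw [h2v]
      rw [if_neg (by decide), if_neg (by simpa using hx)]

lemma count_split (w : List (Fin (n - m + 2))) :
    w.length = w.countP (fun x => x.val ≤ 1) + w.countP (fun x => 2 ≤ x.val) := by
  induction w with
  | nil => rfl
  | cons x w ih =>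
    simp only [List.length_cons, List.countP_cons, ih]
    by_cases hx : x.val ≤ 1
    · rw [if_pos (by simpa using hx), if_neg (by simpa using (by omega : ¬ (2 ≤ x.val)))]
      omega
    · rw [if_neg (by simpa using hx), if_pos (by simpa using (by omega : 2 ≤ x.val))]
      omega

lemma lower_bound (h1 : 1 ≤ m) (h2 : m + 1 ≤ n) (w : List (Fin (n - m + 2))) (q0 : Fin n)
    (hsync : ∀ q, wordAct (act n m h2) w q = q0) :
    (m - 1) ^ 2 + (∑ j ∈ Finset.range (n - m), (j + 1)) ≤ w.length := by
  -- q0 is in the core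
  have hq0 : q0.val < m := by
    have := word_core_closed n m h1 h2 w ⟨0, by omega⟩ (by simp; omega)
    rwa [hsync ⟨0, by omega⟩] at this
  -- tail bound
  have himg : Finset.univ.image (wordAct (act n m h2) w) = {q0} := by
    apply Finset.eq_singleton_iff_unique_mem.2
    constructor
    · rw [Finset.mem_image]; exact ⟨⟨0, by omega⟩, Finset.mem_univ _, hsync _⟩
    · intro q hq
      rw [Finset.mem_image] at hq
      rcases hq with ⟨p, _, hp⟩
      rw [← hp, hsync p]
  have htail := phi_word n m h1 h2 w Finset.univ
  rw [himg] at htail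
  have hphiq0 : phi n m ({q0} : Finset (Fin n)) = 0 := by
    simp [phi, wt]
    omega
  rw [hphiq0, phi_univ n m h1 h2] at htail
  -- core bound
  have hcore : (m - 1) ^ 2 ≤ w.countP (fun x => x.val ≤ 1) := by
    rcases Nat.lt_or_ge m 2 with hm | hm
    · have : m = 1 := by omega
      simp [this]
    · haveI : NeZero m := ⟨by omega⟩
      have hs : ∀ z : ZMod m, wordAct (cact m) (w.map (g n m)) z = ((q0.val : ℕ) : ZMod m) := by
        intro z
        have hzlt : z.val < m := ZMod.val_lt z
        set q : Fin n := ⟨z.val, by omega⟩ with hqdef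
        have hzq : ((q.val : ℕ) : ZMod m) = z := by
          rw [hqdef]
          exact ZMod.natCast_rightInverse z
        rw [← hzq, transfer n m h1 h2 w q (by rw [hqdef]; exact hzlt)]
        rw [hsync q]
      have := core_lb m hm _ _ hs
      rwa [count_transfer] at this
  have := count_split n m w
  omega

end Bridge
end St6z

namespace St6w
open St6y

section Upper
variable (n m : ℕ)

/-- `dwn i = [c_i, c_{i-1}, ..., c_0]` : moves a token from tail position `m+i` to core `0`. -/
def dwn : ℕ → List (Fin (n - m + 2))
  | 0 => [lc n m 0]
  | (i+1) => lc n m (i+1) :: dwn i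

/-- `tw K = dwn 0 ++ dwn 1 ++ ... ++ dwn (K-1)` : tail-collapsing word. -/
def tw : ℕ → List (Fin (n - m + 2))
  | 0 => []
  | (K+1) => tw K ++ dwn n m K

/-- rounds of the Černý word. -/
def cwr : ℕ → List (Fin (n - m + 2))
  | 0 => []
  | (t+1) => cwr t ++ (List.replicate (m - 1) (la n m) ++ [lb n m])

def coreW : List (Fin (n - m + 2)) :=
  if m ≤ 1 then [] else lb n m :: cwr n m (m - 2)

def bigW : List (Fin (n - m + 2)) := tw n m (n - m) ++ coreW n m

lemma dwn_length (i : ℕ) : (dwn n m i).length = i + 1 := by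
  induction i with
  | zero => rfl
  | succ i ih => simp [dwn, ih]

lemma tw_length (K : ℕ) : (tw n m K).length * 2 = K * (K + 1) := by
  induction K with
  | zero => rfl
  | succ K ih =>
    simp only [tw, List.length_append, dwn_length, Nat.add_mul, ih]
    ring

lemma cwr_length (h1 : 1 ≤ m) (t : ℕ) : (cwr n m t).length = t * m := by
  induction t with
  | zero => simp [cwr]
  | succ t ih =>
    simp only [cwr, List.length_append, ih, List.length_replicate, List.length_cons,
      List.length_nil]
    have : m - 1 + (0 + 1) = m := by omega
    rw [this, Nat.succ_mul]

lemma coreW_length (h1 : 1 ≤ m) : (coreW n m).length = (m - 1) ^ 2 := by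
  rcases Nat.lt_or_ge m 2 with hm | hm
  · have : m = 1 := by omega
    simp [coreW, this]
  · rw [coreW, if_neg (by omega)]
    simp only [List.length_cons, cwr_length n m h1]
    obtain ⟨p, rfl⟩ : ∃ p, m = p + 2 := ⟨m - 2, by omega⟩
    show (p + 2 - 2) * (p + 2) + 1 = (p + 2 - 1) ^ 2
    simp only [Nat.add_sub_cancel, show p + 2 - 1 = p + 1 by omega]
    ring

lemma bigW_length (h1 : 1 ≤ m) (h2 : m + 1 ≤ n) :
    (bigW n m).length = (m - 1) ^ 2 + (n - m + 1) * (n - m) / 2 := by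
  rw [bigW, List.length_append, coreW_length n m h1]
  have hT := tw_length n m (n - m)
  have hc : (n - m + 1) * (n - m) = (n - m) * (n - m + 1) := Nat.mul_comm _ _
  rw [hc]
  omega

lemma wordAct_append {Q σ : Type*} (a : σ → Q → Q) (u v : List σ) (q : Q) :
    wordAct a (u ++ v) q = wordAct a v (wordAct a u q) := by
  simp [wordAct, List.foldl_append]

lemma wordAct_fix {Q σ : Type*} (a : σ → Q → Q) (L : List σ) (q : Q)
    (h : ∀ x ∈ L, a x q = q) : wordAct a L q = q := by
  induction L with
  | nil => rfl
  | cons x L ih =>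
    have h0 : wordAct a (x :: L) q = wordAct a L (a x q) := rfl
    rw [h0, h x List.mem_cons_self]
    exact ih (fun y hy => h y (List.mem_cons_of_mem _ hy))

lemma dwn_mem (i : ℕ) (x : Fin (n - m + 2)) (hx : x ∈ dwn n m i) : ∃ j, j ≤ i ∧ x = lc n m j := by
  induction i with
  | zero => simp only [dwn, List.mem_singleton] at hx; exact ⟨0, le_refl _, hx⟩
  | succ i ih =>
    simp only [dwn, List.mem_cons] at hx
    rcases hx with rfl | hx
    · exact ⟨i + 1, le_refl _, rfl⟩
    · rcases ih hx with ⟨j, hj, hh⟩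
      exact ⟨j, by omega, hh⟩

lemma tw_mem (K : ℕ) (x : Fin (n - m + 2)) (hx : x ∈ tw n m K) : ∃ j, j < K ∧ x = lc n m j := by
  induction K with
  | zero => simp [tw] at hx
  | succ K ih =>
    simp only [tw, List.mem_append] at hx
    rcases hx with hx | hx
    · rcases ih hx with ⟨j, hj, h⟩; exact ⟨j, by omega, h⟩
    · rcases dwn_mem n m K x hx with ⟨j, hj, h⟩; exact ⟨j, by omega, h⟩

lemma dwn_down (h1 : 1 ≤ m) (h2 : m + 1 ≤ n) (i : ℕ) (hi : i < n - m) :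
    wordAct (act n m h2) (dwn n m i) ⟨m + i, by omega⟩ = ⟨0, by omega⟩ := by
  induction i with
  | zero =>
    show act n m h2 (lc n m 0) ⟨m + 0, by omega⟩ = ⟨0, by omega⟩
    apply Fin.ext
    have := act_c_down n m h2 0 (by omega) ⟨m + 0, by omega⟩ (by rfl)
    rw [if_pos rfl] at this
    rw [this]
  | succ i ih =>
    have h0 : wordAct (act n m h2) (dwn n m (i+1)) ⟨m + (i+1), by omega⟩
        = wordAct (act n m h2) (dwn n m i) (act n m h2 (lc n m (i+1)) ⟨m + (i+1), by omega⟩) :=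
      rfl
    have hst : act n m h2 (lc n m (i+1)) ⟨m + (i+1), by omega⟩ = ⟨m + i, by omega⟩ := by
      apply Fin.ext
      have := act_c_down n m h2 (i+1) (by omega) ⟨m + (i+1), by omega⟩ (by rfl)
      rw [if_neg (by omega)] at this
      rw [this]
      simp
    rw [h0, hst]
    exact ih (by omega)

lemma tw_core (h1 : 1 ≤ m) (h2 : m + 1 ≤ n) (K : ℕ) (hK : K ≤ n - m) :
    ∀ q : Fin n, q.val < m + K → (wordAct (act n m h2) (tw n m K) q).val < m := by
  induction K with
  | zero => intro q hq; exact hq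
  | succ K ih =>
    intro q hq
    have h0 : wordAct (act n m h2) (tw n m (K+1)) q
        = wordAct (act n m h2) (dwn n m K) (wordAct (act n m h2) (tw n m K) q) := by
      rw [tw, wordAct_append]
    rw [h0]
    rcases Nat.lt_or_ge q.val (m + K) with hlt | hge
    · have hc := ih (by omega) q hlt
      have hfix : wordAct (act n m h2) (dwn n m K) (wordAct (act n m h2) (tw n m K) q)
          = wordAct (act n m h2) (tw n m K) q := by
        apply wordAct_fix
        intro x hx
        rcases dwn_mem n m K x hx with ⟨j, hj, rfl⟩
        exact act_c_core n m h1 h2 j (by omega) _ hc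
      rw [hfix]; exact hc
    · have hqv : q.val = m + K := by omega
      have hfix : wordAct (act n m h2) (tw n m K) q = q := by
        apply wordAct_fix
        intro x hx
        rcases tw_mem n m K x hx with ⟨j, hj, rfl⟩
        apply act_c_other n m h2 j (by omega) q (by omega)
        rintro ⟨hj1, he⟩; omega
      rw [hfix]
      have hqe : q = ⟨m + K, by omega⟩ := Fin.ext hqv
      rw [hqe, dwn_down n m h1 h2 K (by omega)]
      simpa using (show 0 < m by omega)

lemma repa (h1 : 1 ≤ m) (h2 : m + 1 ≤ n) (t : ℕ) :
    ∀ q : Fin n, q.val < m →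
      (wordAct (act n m h2) (List.replicate t (la n m)) q).val = (q.val + t) % m := by
  induction t with
  | zero =>
    intro q hq
    show q.val = (q.val + 0) % m
    rw [Nat.add_zero, Nat.mod_eq_of_lt hq]
  | succ t ih =>
    intro q hq
    have h0 : wordAct (act n m h2) (List.replicate (t+1) (la n m)) q
        = wordAct (act n m h2) (List.replicate t (la n m)) (act n m h2 (la n m) q) := rfl
    rw [h0, ih _ (act_core_closed n m h1 h2 _ q hq), act_a_core n m h1 h2 q hq]
    rw [Nat.mod_add_mod]
    congr 1
    omega

lemma round_step (h1 : 2 ≤ m) (h2 : m + 1 ≤ n) (q : Fin n) (hq1 : 1 ≤ q.val)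
    (hq2 : q.val ≤ m - 1) :
    (wordAct (act n m h2) (List.replicate (m - 1) (la n m) ++ [lb n m]) q).val
      = if q.val = 1 then 1 else q.val - 1 := by
  rw [wordAct_append]
  set r := wordAct (act n m h2) (List.replicate (m-1) (la n m)) q with hr
  have hrv : r.val = (q.val + (m - 1)) % m := by
    rw [hr, repa n m (by omega) h2 (m-1) q (by omega)]
  have he : q.val + (m - 1) = m + (q.val - 1) := by omega
  rw [he] at hrv
  have hrv2 : r.val = q.val - 1 := by
    rw [hrv, Nat.add_mod_left, Nat.mod_eq_of_lt (by omega)]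
  show (act n m h2 (lb n m) r).val = _
  by_cases hq1' : q.val = 1
  · rw [if_pos hq1']
    rw [act_b_zero n m (by omega) h2 r (by omega)]
    exact Nat.mod_eq_of_lt (by omega)
  · rw [if_neg hq1']
    rw [act_b_nz n m h2 r (by omega)]
    exact hrv2

lemma rounds (h1 : 2 ≤ m) (h2 : m + 1 ≤ n) (t : ℕ) :
    ∀ q : Fin n, 1 ≤ q.val → q.val ≤ m - 1 →
      1 ≤ (wordAct (act n m h2) (cwr n m t) q).val ∧
      (wordAct (act n m h2) (cwr n m t) q).val ≤ max 1 (m - 1 - t) := by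
  induction t with
  | zero =>
    intro q hq1 hq2
    constructor
    · exact hq1
    · simp [cwr, wordAct]; omega
  | succ t ih =>
    intro q hq1 hq2
    have h0 : wordAct (act n m h2) (cwr n m (t+1)) q
        = wordAct (act n m h2) (List.replicate (m-1) (la n m) ++ [lb n m])
            (wordAct (act n m h2) (cwr n m t) q) := by
      rw [cwr, wordAct_append]
    rw [h0]
    rcases ih q hq1 hq2 with ⟨ha, hb⟩
    set r := wordAct (act n m h2) (cwr n m t) q with hrdef
    have hrm : r.val ≤ m - 1 := by
      have : max 1 (m - 1 - t) ≤ m - 1 := by omega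
      omega
    rw [round_step n m h1 h2 r ha hrm]
    by_cases hr1 : r.val = 1
    · rw [if_pos hr1]; omega
    · rw [if_neg hr1]; omega

def q0 (h1 : 1 ≤ m) (h2 : m + 1 ≤ n) : Fin n := ⟨1 % m, by
    have := Nat.mod_lt 1 (show 0 < m by omega); omega⟩

lemma coreW_sync (h1 : 1 ≤ m) (h2 : m + 1 ≤ n) (q : Fin n) (hq : q.val < m) :
    wordAct (act n m h2) (coreW n m) q = q0 n m h1 h2 := by
  rcases Nat.lt_or_ge m 2 with hm | hm
  · have hm1 : m = 1 := by omega
    have : coreW n m = [] := by rw [coreW, if_pos (by omega)]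
    rw [this]
    apply Fin.ext
    show q.val = 1 % m
    rw [hm1]
    omega
  · have hcw : coreW n m = lb n m :: cwr n m (m - 2) := by rw [coreW, if_neg (by omega)]
    rw [hcw]
    have h0 : wordAct (act n m h2) (lb n m :: cwr n m (m-2)) q
        = wordAct (act n m h2) (cwr n m (m-2)) (act n m h2 (lb n m) q) := rfl
    rw [h0]
    set r := act n m h2 (lb n m) q with hrdef
    have hr : 1 ≤ r.val ∧ r.val ≤ m - 1 := by
      by_cases hq0 : q.val = 0
      · have := act_b_zero n m h1 h2 q hq0
        rw [← hrdef] at this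
        rw [this]
        have : 1 % m = 1 := Nat.mod_eq_of_lt (by omega)
        omega
      · have := act_b_nz n m h2 q hq0
        rw [← hrdef] at this
        rw [this]
        omega
    rcases rounds n m hm h2 (m - 2) r hr.1 hr.2 with ⟨ha, hb⟩
    have : max 1 (m - 1 - (m - 2)) = 1 := by omega
    rw [this] at hb
    apply Fin.ext
    show _ = 1 % m
    have h11 : 1 % m = 1 := Nat.mod_eq_of_lt (by omega)
    rw [h11]
    omega

lemma bigW_sync (h1 : 1 ≤ m) (h2 : m + 1 ≤ n) (q : Fin n) :
    wordAct (act n m h2) (bigW n m) q = q0 n m h1 h2 := by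
  rw [bigW, wordAct_append]
  apply coreW_sync n m h1 h2
  apply tw_core n m h1 h2 (n - m) (le_refl _) q
  have := q.isLt
  omega

end Upper
end St6w

namespace St6f
open St6y St6w

section Final
variable (n m : ℕ)

lemma reach_core (h1 : 1 ≤ m) (h2 : m + 1 ≤ n) (q : Fin n) (hq : q.val < m) (p : Fin n) :
    ∃ w : List (Fin (n - m + 2)), wordAct (act n m h2) w p = q := by
  refine ⟨bigW n m ++ List.replicate ((q.val + m) - 1) (la n m), ?_⟩
  rw [wordAct_append, bigW_sync n m h1 h2 p]
  apply Fin.ext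
  have hq0lt : (q0 n m h1 h2).val < m := by
    show 1 % m < m
    exact Nat.mod_lt _ (by omega)
  rw [repa n m h1 h2 _ _ hq0lt]
  show ((1 % m) + (q.val + m - 1)) % m = q.val
  rcases Nat.lt_or_ge m 2 with hm | hm
  · have hm1 : m = 1 := by omega
    rw [hm1] at hq ⊢
    omega
  · have h11 : 1 % m = 1 := Nat.mod_eq_of_lt (by omega)
    rw [h11, show 1 + (q.val + m - 1) = q.val + m by omega, Nat.add_mod_right,
        Nat.mod_eq_of_lt hq]

lemma reach_set (h1 : 1 ≤ m) (h2 : m + 1 ≤ n) :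
    {q : Fin n | ∀ p : Fin n, ∃ w : List (Fin (n - m + 2)), wordAct (act n m h2) w p = q}
      = {q : Fin n | q.val < m} := by
  ext q
  simp only [Set.mem_setOf_eq]
  constructor
  · intro h
    rcases h ⟨0, by omega⟩ with ⟨w, hw⟩
    rw [← hw]
    exact word_core_closed n m h1 h2 w _ (by simp; omega)
  · intro hq p
    exact reach_core n m h1 h2 q hq p

lemma card_core (h1 : 1 ≤ m) (h2 : m + 1 ≤ n) :
    ({q : Fin n | q.val < m}).ncard = m := by
  have : {q : Fin n | q.val < m} = ↑(Finset.univ.filter (fun q : Fin n => q.val < m)) := by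
    ext q; simp
  rw [this, Set.ncard_coe_finset]
  apply Finset.card_eq_of_bijective (fun i hi => ⟨i, by omega⟩)
  · intro a ha
    rw [Finset.mem_filter] at ha
    exact ⟨a.val, ha.2, Fin.ext rfl⟩
  · intro i hi
    rw [Finset.mem_filter]
    exact ⟨Finset.mem_univ _, hi⟩
  · intro i j hi hj he
    have := congrArg Fin.val he
    simpa using this

end Final
end St6f


/-- for every `n ≥ 2` and `1 ≤ m ≤ n-1` there exists a
synchronizing DFA with `n` states whose set of states reachable from every
state has size `m`, and whose synchronization length is exactly
`(m-1)^2 + (n-m+1)(n-m)/2`. -/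
theorem exists_nontransitive_dfa_with_sync_length (n m : ℕ) (hn : 2 ≤ n)
    (hm1 : 1 ≤ m) (hm2 : m ≤ n - 1) :
    ∃ (σ : Type) (_ : Fintype σ) (act : σ → Fin n → Fin n),
      {q : Fin n | ∀ p : Fin n, ∃ w : List σ, wordAct act w p = q}.ncard = m ∧
      (∃ w : List σ, (∃ q0 : Fin n, ∀ q, wordAct act w q = q0) ∧
        w.length = (m - 1) ^ 2 + (n - m + 1) * (n - m) / 2) ∧
      (∀ w : List σ, (∃ q0 : Fin n, ∀ q, wordAct act w q = q0) →
        (m - 1) ^ 2 + (n - m + 1) * (n - m) / 2 ≤ w.length) := by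
  have h2 : m + 1 ≤ n := by omega
  refine ⟨Fin (n - m + 2), inferInstance, St6y.act n m h2, ?_, ?_, ?_⟩
  · rw [St6f.reach_set n m hm1 h2]
    exact St6f.card_core n m hm1 h2
  · exact ⟨St6w.bigW n m,
      ⟨St6w.q0 n m hm1 h2, fun q => St6w.bigW_sync n m hm1 h2 q⟩,
      St6w.bigW_length n m hm1 h2⟩
  · rintro w ⟨p0, hs⟩
    have hlb := St6z.lower_bound n m hm1 h2 w p0 hs
    rwa [St6y.gauss (n - m)] at hlb
end

section
/- Assume the Černý conjecture holds for all DFAs with fewer than n states (n ≥ 2), i.e. every synchronizing DFA with m < n states has synchronization length at most (m−1)². Then every nontransitive synchronizing DFA with n states has synchronization length at most max(n(n−1)/2, (n−2)² + 1). -/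
theorem wordAct_append {Q σ : Type*} (act : σ → Q → Q) (u v : List σ) (q : Q) :
    wordAct act (u ++ v) q = wordAct act v (wordAct act u q) := by
  simp [wordAct, List.foldl_append]

theorem wordAct_cons {Q σ : Type*} (act : σ → Q → Q) (a : σ) (u : List σ) (q : Q) :
    wordAct act (a :: u) q = wordAct act u (act a q) := rfl

theorem wordAct_mem {n : ℕ} {σ : Type} (act : σ → Fin n → Fin n) (M : Finset (Fin n))
    (hM : ∀ a s, s ∈ M → act a s ∈ M) :
    ∀ (u : List σ) (s : Fin n), s ∈ M → wordAct act u s ∈ M := by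
  intro u
  induction u with
  | nil => intro s hs; exact hs
  | cons a u ih => intro s hs; rw [wordAct_cons]; exact ih _ (hM a s hs)

theorem phase1_step {n : ℕ} {σ : Type} (act : σ → Fin n → Fin n) (M : Finset (Fin n))
    (hM : ∀ a s, s ∈ M → act a s ∈ M)
    (hreach : ∀ p : Fin n, ∃ u : List σ, wordAct act u p ∈ M)
    (S : Finset (Fin n)) (hne : (S \ M).Nonempty) :
    ∃ u : List σ,
      u.length + (S \ M).card ≤ (Finset.univ \ M).card + 1 ∧
      ((S.image (wordAct act u)) \ M).card + 1 ≤ (S \ M).card := by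
  classical
  have dex : ∀ p : Fin n, ∃ k, ∃ u : List σ, u.length ≤ k ∧ wordAct act u p ∈ M := by
    intro p
    obtain ⟨u, hu⟩ := hreach p
    exact ⟨u.length, u, le_rfl, hu⟩
  set d : Fin n → ℕ := fun p => Nat.find (dex p) with hd
  have hdspec : ∀ p, ∃ u : List σ, u.length ≤ d p ∧ wordAct act u p ∈ M :=
    fun p => Nat.find_spec (dex p)
  have hdle : ∀ p k, (∃ u : List σ, u.length ≤ k ∧ wordAct act u p ∈ M) → d p ≤ k :=
    fun p k h => Nat.find_le h
  have hd_mem : ∀ p, d p = 0 → p ∈ M := by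
    intro p hp
    obtain ⟨u, hu1, hu2⟩ := hdspec p
    rw [hp, Nat.le_zero, List.length_eq_zero_iff] at hu1
    subst hu1
    exact hu2
  have hd_mem' : ∀ p, p ∈ M → d p = 0 := by
    intro p hp
    exact Nat.le_zero.mp (hdle p 0 ⟨[], le_rfl, hp⟩)
  have hsub : ∀ p (v : List σ), d p ≤ v.length + d (wordAct act v p) := by
    intro p v
    obtain ⟨u, hu1, hu2⟩ := hdspec (wordAct act v p)
    refine hdle p _ ⟨v ++ u, ?_, ?_⟩
    · simp [List.length_append]; omega
    · rw [wordAct_append]; exact hu2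
  -- pick p minimizing d on S \ M
  obtain ⟨p, hpmem, hpmin⟩ := Finset.exists_min_image (S \ M) d hne
  obtain ⟨u, hul, huM⟩ := hdspec p
  have hpnM : p ∉ M := (Finset.mem_sdiff.mp hpmem).2
  have hul' : u.length = d p := by
    have := hdle p u.length ⟨u, le_rfl, huM⟩
    omega
  set ℓ := u.length with hℓ
  have hℓpos : 1 ≤ ℓ := by
    rcases Nat.eq_zero_or_pos ℓ with h | h
    · exfalso
      rw [List.length_eq_zero_iff] at h
      subst h
      exact hpnM huM
    · exact h
  set x : ℕ → Fin n := fun j => wordAct act (u.take j) p with hx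
  have hdx : ∀ j ≤ ℓ, d (x j) = ℓ - j := by
    intro j hj
    have h1 : d (x j) ≤ ℓ - j := by
      refine hdle _ _ ⟨u.drop j, ?_, ?_⟩
      · simp; omega
      · rw [hx]
        simp only
        rw [← wordAct_append, List.take_append_drop]
        exact huM
    have h2 : d p ≤ j + d (x j) := by
      have := hsub p (u.take j)
      rwa [List.length_take, min_eq_left hj] at this
    omega
  set T : Finset (Fin n) := (Finset.range (ℓ - 1)).image (fun j => x (j + 1)) with hT
  have hTcard : T.card = ℓ - 1 := by
    rw [hT, Finset.card_image_of_injOn, Finset.card_range]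
    intro j1 h1 j2 h2 he
    simp only [Finset.coe_range, Set.mem_Iio] at h1 h2
    have e1 := hdx (j1 + 1) (by omega)
    have e2 := hdx (j2 + 1) (by omega)
    simp only at he
    rw [he] at e1
    omega
  have hTdisj : Disjoint T (S \ M) := by
    rw [Finset.disjoint_left]
    intro y hy hy2
    rw [hT, Finset.mem_image] at hy
    obtain ⟨j, hj, rfl⟩ := hy
    rw [Finset.mem_range] at hj
    have := hpmin _ hy2
    have := hdx (j + 1) (by omega)
    omega
  have hTsub : T ⊆ Finset.univ \ M := by
    intro y hy
    rw [hT, Finset.mem_image] at hy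
    obtain ⟨j, hj, rfl⟩ := hy
    rw [Finset.mem_range] at hj
    rw [Finset.mem_sdiff]
    refine ⟨Finset.mem_univ _, ?_⟩
    intro hmem
    have := hd_mem' _ hmem
    have := hdx (j + 1) (by omega)
    omega
  have hScard : T.card + (S \ M).card ≤ (Finset.univ \ M).card := by
    rw [← Finset.card_union_of_disjoint hTdisj]
    apply Finset.card_le_card
    apply Finset.union_subset hTsub
    intro y hy
    rw [Finset.mem_sdiff] at hy ⊢
    exact ⟨Finset.mem_univ _, hy.2⟩
  refine ⟨u, by omega, ?_⟩
  have himg : (S.image (wordAct act u)) \ M ⊆ ((S \ M).erase p).image (wordAct act u) := by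
    intro r hr
    rw [Finset.mem_sdiff, Finset.mem_image] at hr
    obtain ⟨⟨q, hq, rfl⟩, hrnM⟩ := hr
    rw [Finset.mem_image]
    refine ⟨q, ?_, rfl⟩
    rw [Finset.mem_erase, Finset.mem_sdiff]
    refine ⟨?_, hq, ?_⟩
    · rintro rfl; exact hrnM huM
    · intro hqM; exact hrnM (wordAct_mem act M hM u q hqM)
  have h1 := Finset.card_le_card himg
  have h2 := Finset.card_image_le (s := (S \ M).erase p) (f := wordAct act u)
  have h3 := Finset.card_erase_of_mem hpmem
  have h4 : 1 ≤ (S \ M).card := Finset.card_pos.mpr hne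
  omega

theorem phase1 {n : ℕ} {σ : Type} (act : σ → Fin n → Fin n) (M : Finset (Fin n))
    (hM : ∀ a s, s ∈ M → act a s ∈ M)
    (hreach : ∀ p : Fin n, ∃ u : List σ, wordAct act u p ∈ M) :
    ∀ (t : ℕ) (S : Finset (Fin n)), (S \ M).card ≤ t →
      ∃ u : List σ, (∀ q ∈ S, wordAct act u q ∈ M) ∧
        u.length ≤ ∑ j ∈ Finset.range t, ((Finset.univ \ M).card - j) := by
  classical
  intro t
  induction t with
  | zero =>
    intro S hS
    refine ⟨[], ?_, by simp⟩
    intro q hq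
    have : q ∈ M := by
      by_contra h
      have : q ∈ S \ M := Finset.mem_sdiff.mpr ⟨hq, h⟩
      have := Finset.card_pos.mpr ⟨q, this⟩
      omega
    exact this
  | succ t ih =>
    intro S hS
    by_cases hc : (S \ M).card ≤ t
    · obtain ⟨u, h1, h2⟩ := ih S hc
      refine ⟨u, h1, le_trans h2 ?_⟩
      apply Finset.sum_le_sum_of_subset
      exact Finset.range_subset_range.mpr (by omega)
    · have hcard : (S \ M).card = t + 1 := by omega
      have hne : (S \ M).Nonempty := Finset.card_pos.mp (by omega)
      obtain ⟨u1, hlen1, hred⟩ := phase1_step act M hM hreach S hne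
      obtain ⟨u2, h2M, h2len⟩ := ih (S.image (wordAct act u1)) (by omega)
      refine ⟨u1 ++ u2, ?_, ?_⟩
      · intro q hq
        rw [wordAct_append]
        exact h2M _ (Finset.mem_image_of_mem _ hq)
      · rw [List.length_append, Finset.sum_range_succ]
        have : u1.length ≤ (Finset.univ \ M).card - t := by omega
        omega

theorem gauss_sum (K : ℕ) : 2 * ∑ j ∈ Finset.range K, (K - j) = K * (K + 1) := by
  induction K with
  | zero => simp
  | succ K ih =>
    have h : ∑ j ∈ Finset.range (K+1), (K + 1 - j)
        = (∑ j ∈ Finset.range K, (K - j)) + (K + 1) := by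
      rw [Finset.sum_range_succ]
      have h2 : ∀ j ∈ Finset.range K, (K + 1 - j) = (K - j) + 1 := by
        intro j hj; simp only [Finset.mem_range] at hj; omega
      rw [Finset.sum_congr rfl h2, Finset.sum_add_distrib]
      simp [Finset.card_range]
      omega
    rw [h]
    ring_nf
    ring_nf at ih
    omega

theorem arith_bound (n m g : ℕ) (hn : 2 ≤ n) (hm1 : 1 ≤ m) (hm2 : m ≤ n - 1)
    (hg : 2 * g = (n - m) * ((n - m) + 1)) :
    g + (m - 1) ^ 2 ≤ max (n * (n - 1) / 2) ((n - 2) ^ 2 + 1) := by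
  obtain ⟨a, rfl⟩ : ∃ a, m = a + 1 := ⟨m - 1, by omega⟩
  obtain ⟨b, rfl⟩ : ∃ b, n = a + b + 2 := ⟨n - a - 2, by omega⟩
  have h1 : a + b + 2 - (a + 1) = b + 1 := by omega
  have h2 : a + b + 2 - 1 = a + b + 1 := by omega
  have h3 : a + b + 2 - 2 = a + b := by omega
  have h4 : a + 1 - 1 = a := by omega
  rw [h1] at hg
  rw [h2, h3, h4]
  rcases Nat.eq_zero_or_pos a with rfl | ha
  · apply le_trans _ (le_max_left _ _)
    have heq : g + (0 : ℕ) ^ 2 = g := by ring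
    rw [heq, zero_add, Nat.le_div_iff_mul_le (by norm_num : 0 < 2)]
    nlinarith
  · apply le_trans _ (le_max_right _ _)
    have key : 2 * (g + a ^ 2) ≤ 2 * ((a + b) ^ 2 + 1) := by nlinarith
    omega

noncomputable def restrictAct {n : ℕ} {σ : Type} (act : σ → Fin n → Fin n) (M : Finset (Fin n))
    (hM : ∀ a s, s ∈ M → act a s ∈ M) : σ → Fin M.card → Fin M.card :=
  fun a i => M.equivFin ⟨act a (M.equivFin.symm i).1, hM a _ (M.equivFin.symm i).2⟩

theorem restrictAct_wordAct {n : ℕ} {σ : Type} (act : σ → Fin n → Fin n) (M : Finset (Fin n))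
    (hM : ∀ a s, s ∈ M → act a s ∈ M) (v : List σ) (s : Fin n) (hs : s ∈ M) :
    wordAct (restrictAct act M hM) v (M.equivFin ⟨s, hs⟩)
      = M.equivFin ⟨wordAct act v s, wordAct_mem act M hM v s hs⟩ := by
  induction v generalizing s with
  | nil => rfl
  | cons a v ih =>
    rw [wordAct_cons]
    have h5 : restrictAct act M hM a (M.equivFin ⟨s, hs⟩)
        = M.equivFin ⟨act a s, hM a s hs⟩ := by
      unfold restrictAct
      congr 1
      apply Subtype.ext
      simp [Equiv.symm_apply_apply]
    rw [h5, ih (act a s) (hM a s hs)]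
    rfl


/-- if the Černý conjecture holds for all DFAs with fewer than `n`
states, then every nontransitive synchronizing DFA with `n` states has a
synchronizing word of length at most `max (n(n-1)/2) ((n-2)^2 + 1)`. -/
theorem nontransitive_sync_length_bound (n : ℕ) (hn : 2 ≤ n)
    (cerny_lt : ∀ (m : ℕ), m < n → ∀ (σ' : Type) (act' : σ' → Fin m → Fin m),
      (∃ w : List σ', ∃ q0 : Fin m, ∀ q, wordAct act' w q = q0) →
      ∃ w : List σ', (∃ q0 : Fin m, ∀ q, wordAct act' w q = q0) ∧
        w.length ≤ (m - 1) ^ 2)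
    (σ : Type) (act : σ → Fin n → Fin n)
    (hsync : ∃ w : List σ, ∃ q0 : Fin n, ∀ q, wordAct act w q = q0)
    (hnontrans : ¬ ∀ p q : Fin n, ∃ w : List σ, wordAct act w p = q) :
    ∃ w : List σ, (∃ q0 : Fin n, ∀ q, wordAct act w q = q0) ∧
      w.length ≤ max (n * (n - 1) / 2) ((n - 2) ^ 2 + 1) := by
  classical
  obtain ⟨w, q0, hw⟩ := hsync
  set M : Finset (Fin n) :=
    Finset.univ.filter (fun s => ∀ p, ∃ u : List σ, wordAct act u p = s) with hMdef
  have hmemM : ∀ s, s ∈ M ↔ ∀ p, ∃ u : List σ, wordAct act u p = s := by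
    intro s; simp [hMdef]
  have hq0 : q0 ∈ M := (hmemM q0).mpr (fun p => ⟨w, hw p⟩)
  have hMclosed : ∀ a s, s ∈ M → act a s ∈ M := by
    intro a s hs
    rw [hmemM] at hs ⊢
    intro p
    obtain ⟨u, hu⟩ := hs p
    refine ⟨u ++ [a], ?_⟩
    rw [wordAct_append, hu]
    rfl
  have hreach : ∀ p, ∃ u : List σ, wordAct act u p ∈ M := by
    intro p
    refine ⟨w, ?_⟩
    rw [hw p]
    exact hq0
  have hm1 : 1 ≤ M.card := Finset.card_pos.mpr ⟨q0, hq0⟩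
  have hMlt : M.card < n := by
    push_neg at hnontrans
    obtain ⟨p, q, hpq⟩ := hnontrans
    have hqn : q ∉ M := by
      rw [hmemM]
      push_neg
      exact ⟨p, hpq⟩
    have hne : M ≠ Finset.univ := by
      intro h
      exact hqn (h ▸ Finset.mem_univ q)
    have := Finset.card_lt_iff_ne_univ M |>.mpr hne
    simpa using this
  have hKcard : (Finset.univ \ M).card = n - M.card := by
    rw [Finset.card_sdiff_of_subset (Finset.subset_univ M)]
    simp
  -- Phase 1
  obtain ⟨u1, hu1M, hu1len⟩ := phase1 act M hMclosed hreach
    ((Finset.univ \ M).card) Finset.univ (by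
      apply Finset.card_le_card
      intro y hy
      rw [Finset.mem_sdiff] at hy ⊢
      exact ⟨Finset.mem_univ _, hy.2⟩)
  -- Phase 2: restricted automaton
  set e := M.equivFin with he
  obtain ⟨w2, ⟨i0, hi0⟩, hw2len⟩ := cerny_lt M.card hMlt σ (restrictAct act M hMclosed) (by
    refine ⟨w, e ⟨q0, hq0⟩, ?_⟩
    intro i
    have h1 : i = e (e.symm i) := (e.apply_symm_apply i).symm
    rw [h1, restrictAct_wordAct act M hMclosed w (e.symm i).1 (e.symm i).2]
    congr 1
    apply Subtype.ext
    exact hw _)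
  -- Assemble
  refine ⟨u1 ++ w2, ⟨(e.symm i0).1, ?_⟩, ?_⟩
  · intro q
    rw [wordAct_append]
    have hs : wordAct act u1 q ∈ M := hu1M q (Finset.mem_univ q)
    have := hi0 (e ⟨wordAct act u1 q, hs⟩)
    rw [restrictAct_wordAct act M hMclosed w2 _ hs] at this
    have h2 : (⟨wordAct act w2 (wordAct act u1 q), wordAct_mem act M hMclosed w2 _ hs⟩ : {x // x ∈ M}) = e.symm i0 := by
      rw [← this, Equiv.symm_apply_apply]
    exact congrArg Subtype.val h2
  · rw [List.length_append]
    have hsum := gauss_sum ((Finset.univ \ M).card)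
    rw [hKcard] at hsum hu1len
    have := arith_bound n M.card (∑ j ∈ Finset.range (n - M.card), (n - M.card - j))
      hn hm1 (by omega) hsum
    omega
end
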